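/- arXiv:1101.4169 — 3 statements merged into one kernel-verified Lean document; each statement's English description precedes it below -/
import Mathlib

section
/- Let K be a nonnegative measurable function on (0,∞)² with K(x,y) ≤ k₁²(1+x)^μ(1+y)^μ for some k₁ > 0 and 0 ≤ μ < 1. Let R > 0, δ > 0, L > 0, and let g be a nonnegative measurable function on (0,∞) with ∫₀^R (1+y)^μ g(y) dy ≤ L. Define p(δ) = sup { ∫₀^R 1_{E'}(x) g(x) dx : E' ⊂ (0,R) measurable, |E'| ≤ δ }. Then for every measurable set E ⊂ (0,R) with |E| ≤ δ, ∫₀^R 1_E(x) ∫₀^x K(x−y,y) g(x−y) g(y) dy dx ≤ k₁² (1+R)^μ L p(δ). -/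
open MeasureTheory Set Filter
open scoped ENNReal NNReal

/-- Estimate of the coagulation gain term `I₁ⁿ` in the proof of Lemma 2.2 (iii):
for every measurable `E ⊆ (0,R)` with `|E| ≤ δ`,
`∫₀^R 1_E(x) ∫₀^x K(x-y,y) g(x-y) g(y) dy dx ≤ k₁² (1+R)^μ L p(δ)`,
where `p(δ)` is the supremum of `∫₀^R 1_{E'} g` over measurable `E' ⊆ (0,R)`
with `|E'| ≤ δ`. -/
theorem coagulation_gain_uniform_integrability_estimate
    (K : ℝ → ℝ → ℝ) (k₁ μ R δ L : ℝ) (g : ℝ → ℝ) (p : ℝ)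
    (hKmeas : Measurable (Function.uncurry K))
    (hKnn : ∀ x y, 0 ≤ K x y)
    (hk₁ : 0 < k₁) (hμ0 : 0 ≤ μ) (hμ1 : μ < 1)
    (hK : ∀ x > (0:ℝ), ∀ y > (0:ℝ), K x y ≤ k₁ ^ 2 * (1 + x) ^ μ * (1 + y) ^ μ)
    (hR : 0 < R) (hδ : 0 < δ) (hL : 0 < L)
    (hgmeas : Measurable g) (hgnn : ∀ x, 0 ≤ g x)
    (hgint : IntegrableOn (fun y => (1 + y) ^ μ * g y) (Ioo (0:ℝ) R))
    (hgL : (∫ y in Ioo (0:ℝ) R, (1 + y) ^ μ * g y) ≤ L)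
    (hp : p = sSup {r : ℝ | ∃ E' ⊆ Ioo (0:ℝ) R, MeasurableSet E' ∧
      volume E' ≤ ENNReal.ofReal δ ∧
      r = ∫ x in Ioo (0:ℝ) R, E'.indicator (fun _ => (1:ℝ)) x * g x}) :
    ∀ E ⊆ Ioo (0:ℝ) R, MeasurableSet E → volume E ≤ ENNReal.ofReal δ →
      (∫ x in Ioo (0:ℝ) R, E.indicator (fun _ => (1:ℝ)) x *
          ∫ y in Ioo (0:ℝ) x, K (x - y) y * g (x - y) * g y)
        ≤ k₁ ^ 2 * (1 + R) ^ μ * L * p := by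
  intro E hEsub hEmeas hEvol
  have h1R : (0:ℝ) < 1 + R := by linarith
  set C : ℝ := k₁ ^ 2 * (1 + R) ^ μ with hCdef
  have hC0 : (0:ℝ) ≤ C :=
    mul_nonneg (pow_nonneg hk₁.le 2) (Real.rpow_nonneg h1R.le μ)
  -- `1 ≤ (1+x)^μ` on `(0,R)`
  have hone_le : ∀ x ∈ Ioo (0:ℝ) R, (1:ℝ) ≤ (1 + x) ^ μ := by
    intro x hx
    calc (1:ℝ) = (1 + x) ^ (0:ℝ) := (Real.rpow_zero _).symm
      _ ≤ (1 + x) ^ μ := Real.rpow_le_rpow_of_exponent_le (by linarith [hx.1]) hμ0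
  -- integrability of indicator * g
  have hind_int : ∀ S : Set ℝ, MeasurableSet S →
      IntegrableOn (fun x => S.indicator (fun _ => (1:ℝ)) x * g x) (Ioo (0:ℝ) R) := by
    intro S hS
    refine Integrable.mono' hgint
      (((measurable_const.indicator hS).mul hgmeas).aestronglyMeasurable) ?_
    filter_upwards [ae_restrict_mem measurableSet_Ioo] with x hx
    rcases em (x ∈ S) with hxS | hxS
    · rw [Set.indicator_of_mem hxS, one_mul, Real.norm_eq_abs, abs_of_nonneg (hgnn x)]
      have h1 := hone_le x hx
      have h2 := hgnn x
      nlinarith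
    · rw [Set.indicator_of_notMem hxS, zero_mul, norm_zero]
      exact mul_nonneg (Real.rpow_nonneg (by linarith [hx.1]) μ) (hgnn x)
  -- pointwise bound for elements of the sup set
  have hmem_le : ∀ r ∈ {r : ℝ | ∃ E' ⊆ Ioo (0:ℝ) R, MeasurableSet E' ∧
      volume E' ≤ ENNReal.ofReal δ ∧
      r = ∫ x in Ioo (0:ℝ) R, E'.indicator (fun _ => (1:ℝ)) x * g x}, r ≤ L := by
    rintro r ⟨S, hSsub, hSmeas, hSvol, rfl⟩
    calc (∫ x in Ioo (0:ℝ) R, S.indicator (fun _ => (1:ℝ)) x * g x)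
        ≤ ∫ x in Ioo (0:ℝ) R, (1 + x) ^ μ * g x := by
          refine setIntegral_mono_on (hind_int S hSmeas) hgint measurableSet_Ioo ?_
          intro x hx
          rcases em (x ∈ S) with hxS | hxS
          · rw [Set.indicator_of_mem hxS, one_mul]
            have h1 := hone_le x hx
            have h2 := hgnn x
            nlinarith
          · rw [Set.indicator_of_notMem hxS, zero_mul]
            exact mul_nonneg (Real.rpow_nonneg (by linarith [hx.1]) μ) (hgnn x)
      _ ≤ L := hgL
  have hbdd : BddAbove {r : ℝ | ∃ E' ⊆ Ioo (0:ℝ) R, MeasurableSet E' ∧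
      volume E' ≤ ENNReal.ofReal δ ∧
      r = ∫ x in Ioo (0:ℝ) R, E'.indicator (fun _ => (1:ℝ)) x * g x} :=
    ⟨L, fun r hr => hmem_le r hr⟩
  have h0mem : (0:ℝ) ∈ {r : ℝ | ∃ E' ⊆ Ioo (0:ℝ) R, MeasurableSet E' ∧
      volume E' ≤ ENNReal.ofReal δ ∧
      r = ∫ x in Ioo (0:ℝ) R, E'.indicator (fun _ => (1:ℝ)) x * g x} :=
    ⟨∅, empty_subset _, MeasurableSet.empty, by simp, by simp⟩
  have hp0 : 0 ≤ p := by rw [hp]; exact le_csSup hbdd h0mem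
  -- key estimate: lintegral of g over small subsets of (0,R) is at most p
  have hkey : ∀ S : Set ℝ, MeasurableSet S → S ⊆ Ioo (0:ℝ) R →
      volume S ≤ ENNReal.ofReal δ →
      (∫⁻ z in S, ENNReal.ofReal (g z)) ≤ ENNReal.ofReal p := by
    intro S hSmeas hSsub hSvol
    have hint := hind_int S hSmeas
    have hle : (∫ x in Ioo (0:ℝ) R, S.indicator (fun _ => (1:ℝ)) x * g x) ≤ p := by
      rw [hp]; exact le_csSup hbdd ⟨S, hSsub, hSmeas, hSvol, rfl⟩
    have heq : ENNReal.ofReal (∫ x in Ioo (0:ℝ) R, S.indicator (fun _ => (1:ℝ)) x * g x)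
        = ∫⁻ x in Ioo (0:ℝ) R, ENNReal.ofReal (S.indicator (fun _ => (1:ℝ)) x * g x) :=
      ofReal_integral_eq_lintegral_ofReal hint
        (Eventually.of_forall fun x =>
          mul_nonneg (Set.indicator_nonneg (fun _ _ => zero_le_one) x) (hgnn x))
    have heq2 : (∫⁻ x in Ioo (0:ℝ) R, ENNReal.ofReal (S.indicator (fun _ => (1:ℝ)) x * g x))
        = ∫⁻ z in S, ENNReal.ofReal (g z) := by
      have hpt : ∀ x, ENNReal.ofReal (S.indicator (fun _ => (1:ℝ)) x * g x)
          = S.indicator (fun z => ENNReal.ofReal (g z)) x := by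
        intro x
        rcases em (x ∈ S) with h | h <;> simp [h]
      simp_rw [hpt]
      rw [setLIntegral_indicator hSmeas, inter_eq_self_of_subset_left hSsub]
    rw [← heq2, ← heq]
    exact ENNReal.ofReal_le_ofReal hle
  -- measurability of the inner integral
  have hWmeas : Measurable fun q : ℝ × ℝ =>
      (Ioo (0:ℝ) q.1).indicator (fun y => K (q.1 - y) y * g (q.1 - y) * g y) q.2 := by
    have hset : MeasurableSet {q : ℝ × ℝ | 0 < q.2 ∧ q.2 < q.1} :=
      (measurableSet_lt measurable_const measurable_snd).inter
        (measurableSet_lt measurable_snd measurable_fst)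
    have hfun : Measurable fun q : ℝ × ℝ => K (q.1 - q.2) q.2 * g (q.1 - q.2) * g q.2 :=
      ((hKmeas.comp ((measurable_fst.sub measurable_snd).prodMk measurable_snd)).mul
        (hgmeas.comp (measurable_fst.sub measurable_snd))).mul (hgmeas.comp measurable_snd)
    have heq : (fun q : ℝ × ℝ =>
        (Ioo (0:ℝ) q.1).indicator (fun y => K (q.1 - y) y * g (q.1 - y) * g y) q.2)
        = fun q : ℝ × ℝ => if q ∈ {q : ℝ × ℝ | 0 < q.2 ∧ q.2 < q.1} then
            K (q.1 - q.2) q.2 * g (q.1 - q.2) * g q.2 else 0 := by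
      funext q
      rcases em (q.2 ∈ Ioo (0:ℝ) q.1) with h | h
      · rw [Set.indicator_of_mem h, if_pos ⟨h.1, h.2⟩]
      · rw [Set.indicator_of_notMem h, if_neg (fun hc => h ⟨hc.1, hc.2⟩)]
    rw [heq]
    exact Measurable.ite hset hfun measurable_const
  have hFmeas : StronglyMeasurable fun x : ℝ =>
      ∫ y in Ioo (0:ℝ) x, K (x - y) y * g (x - y) * g y := by
    have h := StronglyMeasurable.integral_prod_right' (ν := volume) hWmeas.stronglyMeasurable
    simpa only [integral_indicator measurableSet_Ioo] using h
  have hFnn : ∀ x : ℝ, 0 ≤ ∫ y in Ioo (0:ℝ) x, K (x - y) y * g (x - y) * g y := by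
    intro x
    exact integral_nonneg fun y => mul_nonneg (mul_nonneg (hKnn _ _) (hgnn _)) (hgnn _)
  -- Step A: rewrite the LHS as a lower Lebesgue integral
  have hA : (∫ x in Ioo (0:ℝ) R, E.indicator (fun _ => (1:ℝ)) x *
        ∫ y in Ioo (0:ℝ) x, K (x - y) y * g (x - y) * g y)
      = (∫⁻ x in Ioo (0:ℝ) R, ENNReal.ofReal (E.indicator (fun _ => (1:ℝ)) x *
          ∫ y in Ioo (0:ℝ) x, K (x - y) y * g (x - y) * g y)).toReal := by
    apply integral_eq_lintegral_of_nonneg_ae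
    · exact Eventually.of_forall fun x =>
        mul_nonneg (Set.indicator_nonneg (fun _ _ => zero_le_one) x) (hFnn x)
    · exact ((measurable_const.indicator hEmeas).stronglyMeasurable.mul
        hFmeas).aestronglyMeasurable
  -- Step B: pointwise bound by the ENNReal inner integral
  have hB : ∀ x : ℝ, ENNReal.ofReal (E.indicator (fun _ => (1:ℝ)) x *
        ∫ y in Ioo (0:ℝ) x, K (x - y) y * g (x - y) * g y)
      ≤ E.indicator (fun _ => (1:ℝ≥0∞)) x *
        ∫⁻ y in Ioo (0:ℝ) x, ENNReal.ofReal (K (x - y) y * g (x - y) * g y) := by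
    intro x
    rcases em (x ∈ E) with h | h
    · rw [Set.indicator_of_mem h, Set.indicator_of_mem h, one_mul, one_mul]
      have hmy : AEStronglyMeasurable (fun y => K (x - y) y * g (x - y) * g y)
          (volume.restrict (Ioo (0:ℝ) x)) :=
        (((hKmeas.comp ((measurable_const.sub measurable_id).prodMk measurable_id)).mul
          (hgmeas.comp (measurable_const.sub measurable_id))).mul hgmeas).aestronglyMeasurable
      rw [integral_eq_lintegral_of_nonneg_ae (Eventually.of_forall fun y =>
        mul_nonneg (mul_nonneg (hKnn _ _) (hgnn _)) (hgnn _)) hmy]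
      exact ENNReal.ofReal_toReal_le
    · simp [Set.indicator_of_notMem h]
  -- Step C: bound the kernel
  have hC2 : ∀ x ∈ Ioo (0:ℝ) R,
      E.indicator (fun _ => (1:ℝ≥0∞)) x *
        ∫⁻ y in Ioo (0:ℝ) x, ENNReal.ofReal (K (x - y) y * g (x - y) * g y)
      ≤ ENNReal.ofReal C * (E.indicator (fun _ => (1:ℝ≥0∞)) x *
        ∫⁻ y in Ioo (0:ℝ) x, ENNReal.ofReal ((1 + y) ^ μ * g y) * ENNReal.ofReal (g (x - y))) := by
    intro x hx
    rcases em (x ∈ E) with h | h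
    · rw [Set.indicator_of_mem h, one_mul, one_mul]
      calc (∫⁻ y in Ioo (0:ℝ) x, ENNReal.ofReal (K (x - y) y * g (x - y) * g y))
          ≤ ∫⁻ y in Ioo (0:ℝ) x, ENNReal.ofReal C *
              (ENNReal.ofReal ((1 + y) ^ μ * g y) * ENNReal.ofReal (g (x - y))) := by
            refine setLIntegral_mono' measurableSet_Ioo ?_
            intro y hy
            have hxy : 0 < x - y := by linarith [hy.2]
            have h1 : K (x - y) y ≤ k₁ ^ 2 * (1 + (x - y)) ^ μ * (1 + y) ^ μ :=
              hK _ hxy _ hy.1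
            have h2 : (1 + (x - y)) ^ μ ≤ (1 + R) ^ μ :=
              Real.rpow_le_rpow (by linarith) (by linarith [hx.2, hy.1]) hμ0
            have hg1 := hgnn (x - y)
            have hg2 := hgnn y
            have hy1 : (0:ℝ) ≤ (1 + y) ^ μ := Real.rpow_nonneg (by linarith [hy.1]) μ
            have hk2 : (0:ℝ) ≤ k₁ ^ 2 := pow_nonneg hk₁.le 2
            have hreal : K (x - y) y * g (x - y) * g y ≤ C * ((1 + y) ^ μ * g y * g (x - y)) := by
              have step1 : K (x - y) y * g (x - y) * g y
                  ≤ (k₁ ^ 2 * (1 + (x - y)) ^ μ * (1 + y) ^ μ) * g (x - y) * g y :=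
                mul_le_mul_of_nonneg_right (mul_le_mul_of_nonneg_right h1 hg1) hg2
              have step2 : (k₁ ^ 2 * (1 + (x - y)) ^ μ * (1 + y) ^ μ) * g (x - y) * g y
                  ≤ (k₁ ^ 2 * (1 + R) ^ μ * (1 + y) ^ μ) * g (x - y) * g y := by
                have := mul_le_mul_of_nonneg_right
                  (mul_le_mul_of_nonneg_left h2 hk2) hy1
                exact mul_le_mul_of_nonneg_right (mul_le_mul_of_nonneg_right this hg1) hg2
              calc K (x - y) y * g (x - y) * g y
                  ≤ (k₁ ^ 2 * (1 + R) ^ μ * (1 + y) ^ μ) * g (x - y) * g y :=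
                    le_trans step1 step2
                _ = C * ((1 + y) ^ μ * g y * g (x - y)) := by rw [hCdef]; ring
            calc ENNReal.ofReal (K (x - y) y * g (x - y) * g y)
                ≤ ENNReal.ofReal (C * ((1 + y) ^ μ * g y * g (x - y))) :=
                  ENNReal.ofReal_le_ofReal hreal
              _ = ENNReal.ofReal C *
                  (ENNReal.ofReal ((1 + y) ^ μ * g y) * ENNReal.ofReal (g (x - y))) := by
                  rw [ENNReal.ofReal_mul hC0, ENNReal.ofReal_mul (mul_nonneg hy1 hg2)]
        _ = ENNReal.ofReal C * ∫⁻ y in Ioo (0:ℝ) x,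
              ENNReal.ofReal ((1 + y) ^ μ * g y) * ENNReal.ofReal (g (x - y)) :=
            lintegral_const_mul' _ _ ENNReal.ofReal_ne_top
    · simp [Set.indicator_of_notMem h]
  have hTC : (∫⁻ x in Ioo (0:ℝ) R, E.indicator (fun _ => (1:ℝ≥0∞)) x *
        ∫⁻ y in Ioo (0:ℝ) x, ENNReal.ofReal (K (x - y) y * g (x - y) * g y))
      ≤ ENNReal.ofReal C * ∫⁻ x in Ioo (0:ℝ) R, E.indicator (fun _ => (1:ℝ≥0∞)) x *
        ∫⁻ y in Ioo (0:ℝ) x, ENNReal.ofReal ((1 + y) ^ μ * g y) * ENNReal.ofReal (g (x - y)) := by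
    calc (∫⁻ x in Ioo (0:ℝ) R, E.indicator (fun _ => (1:ℝ≥0∞)) x *
          ∫⁻ y in Ioo (0:ℝ) x, ENNReal.ofReal (K (x - y) y * g (x - y) * g y))
        ≤ ∫⁻ x in Ioo (0:ℝ) R, ENNReal.ofReal C * (E.indicator (fun _ => (1:ℝ≥0∞)) x *
          ∫⁻ y in Ioo (0:ℝ) x, ENNReal.ofReal ((1 + y) ^ μ * g y) * ENNReal.ofReal (g (x - y))) :=
          setLIntegral_mono' measurableSet_Ioo hC2
      _ = _ := lintegral_const_mul' _ _ ENNReal.ofReal_ne_top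
  -- Step D: Fubini (Tonelli) swap
  have hindne : ∀ x : ℝ, E.indicator (fun _ => (1:ℝ≥0∞)) x ≠ ⊤ := by
    intro x; rcases em (x ∈ E) with h | h <;> simp [h]
  have hswap : (∫⁻ x in Ioo (0:ℝ) R, E.indicator (fun _ => (1:ℝ≥0∞)) x *
        ∫⁻ y in Ioo (0:ℝ) x, ENNReal.ofReal ((1 + y) ^ μ * g y) * ENNReal.ofReal (g (x - y)))
      = ∫⁻ y, ∫⁻ x in Ioo (0:ℝ) R, E.indicator (fun _ => (1:ℝ≥0∞)) x *
        (Ioo (0:ℝ) x).indicator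
          (fun y' => ENNReal.ofReal ((1 + y') ^ μ * g y') * ENNReal.ofReal (g (x - y'))) y := by
    have h1 : ∀ x : ℝ, E.indicator (fun _ => (1:ℝ≥0∞)) x *
        (∫⁻ y in Ioo (0:ℝ) x, ENNReal.ofReal ((1 + y) ^ μ * g y) * ENNReal.ofReal (g (x - y)))
        = ∫⁻ y, E.indicator (fun _ => (1:ℝ≥0∞)) x *
          (Ioo (0:ℝ) x).indicator
            (fun y' => ENNReal.ofReal ((1 + y') ^ μ * g y') * ENNReal.ofReal (g (x - y'))) y := by
      intro x
      rw [← lintegral_indicator measurableSet_Ioo, lintegral_const_mul' _ _ (hindne x)]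
    have hmeasprod : Measurable fun q : ℝ × ℝ =>
        E.indicator (fun _ => (1:ℝ≥0∞)) q.1 *
        (Ioo (0:ℝ) q.1).indicator
          (fun y' => ENNReal.ofReal ((1 + y') ^ μ * g y') * ENNReal.ofReal (g (q.1 - y'))) q.2 := by
      have hset : MeasurableSet {q : ℝ × ℝ | 0 < q.2 ∧ q.2 < q.1} :=
        (measurableSet_lt measurable_const measurable_snd).inter
          (measurableSet_lt measurable_snd measurable_fst)
      have hfun : Measurable fun q : ℝ × ℝ =>
          ENNReal.ofReal ((1 + q.2) ^ μ * g q.2) * ENNReal.ofReal (g (q.1 - q.2)) := by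
        have hφ : Measurable fun y : ℝ => (1 + y) ^ μ * g y :=
          (((Real.continuous_rpow_const hμ0).comp
            (continuous_const.add continuous_id)).measurable).mul hgmeas
        exact ((hφ.comp measurable_snd).ennreal_ofReal).mul
          ((hgmeas.comp (measurable_fst.sub measurable_snd)).ennreal_ofReal)
      have hE1 : Measurable fun q : ℝ × ℝ => E.indicator (fun _ => (1:ℝ≥0∞)) q.1 :=
        (measurable_const.indicator hEmeas).comp measurable_fst
      have heq : (fun q : ℝ × ℝ =>
          E.indicator (fun _ => (1:ℝ≥0∞)) q.1 *
          (Ioo (0:ℝ) q.1).indicator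
            (fun y' => ENNReal.ofReal ((1 + y') ^ μ * g y') * ENNReal.ofReal (g (q.1 - y'))) q.2)
          = fun q : ℝ × ℝ => E.indicator (fun _ => (1:ℝ≥0∞)) q.1 *
            (if q ∈ {q : ℝ × ℝ | 0 < q.2 ∧ q.2 < q.1} then
              ENNReal.ofReal ((1 + q.2) ^ μ * g q.2) * ENNReal.ofReal (g (q.1 - q.2)) else 0) := by
        funext q
        rcases em (q.2 ∈ Ioo (0:ℝ) q.1) with h | h
        · rw [Set.indicator_of_mem h, if_pos ⟨h.1, h.2⟩]
        · rw [Set.indicator_of_notMem h, if_neg (fun hc => h ⟨hc.1, hc.2⟩)]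
      rw [heq]
      exact hE1.mul (Measurable.ite hset hfun measurable_const)
    simp_rw [h1]
    exact lintegral_lintegral_swap hmeasprod.aemeasurable
  -- Step E: estimate the inner integral after swapping
  have hinner : ∀ y : ℝ,
      (∫⁻ x in Ioo (0:ℝ) R, E.indicator (fun _ => (1:ℝ≥0∞)) x *
        (Ioo (0:ℝ) x).indicator
          (fun y' => ENNReal.ofReal ((1 + y') ^ μ * g y') * ENNReal.ofReal (g (x - y'))) y)
      ≤ (Ioo (0:ℝ) R).indicator
          (fun y' => ENNReal.ofReal ((1 + y') ^ μ * g y') * ENNReal.ofReal p) y := by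
    intro y
    rcases em (y ∈ Ioo (0:ℝ) R) with hy | hy
    · rw [Set.indicator_of_mem hy]
      set S : Set ℝ := E ∩ Ioi y with hSdef
      have hSmeas' : MeasurableSet S := hEmeas.inter measurableSet_Ioi
      set S' : Set ℝ := (fun z => z + y) ⁻¹' S with hS'def
      have hS'meas : MeasurableSet S' := (measurable_add_const y) hSmeas'
      have hS'sub : S' ⊆ Ioo (0:ℝ) R := by
        intro z hz
        have h1 : z + y ∈ E := hz.1
        have h2 : z + y ∈ Ioi y := hz.2
        have h3 := hEsub h1
        constructor
        · have := mem_Ioi.mp h2; linarith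
        · have := h3.2; linarith [hy.1]
      have hS'vol : volume S' ≤ ENNReal.ofReal δ := by
        rw [hS'def, measure_preimage_add_right]
        exact le_trans (measure_mono inter_subset_left) hEvol
      have hptw : ∀ x : ℝ, E.indicator (fun _ => (1:ℝ≥0∞)) x *
          (Ioo (0:ℝ) x).indicator
            (fun y' => ENNReal.ofReal ((1 + y') ^ μ * g y') * ENNReal.ofReal (g (x - y'))) y
          = S.indicator
            (fun x' => ENNReal.ofReal ((1 + y) ^ μ * g y) * ENNReal.ofReal (g (x' - y))) x := by
        intro x
        by_cases hxE : x ∈ E <;> by_cases hyx : y < x <;>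
          simp [hSdef, Set.indicator_apply, hxE, hyx, Set.mem_Ioo, Set.mem_Ioi, hy.1,
            Set.mem_inter_iff, not_lt]
      calc (∫⁻ x in Ioo (0:ℝ) R, E.indicator (fun _ => (1:ℝ≥0∞)) x *
            (Ioo (0:ℝ) x).indicator
              (fun y' => ENNReal.ofReal ((1 + y') ^ μ * g y') * ENNReal.ofReal (g (x - y'))) y)
          = ∫⁻ x in Ioo (0:ℝ) R, S.indicator
              (fun x' => ENNReal.ofReal ((1 + y) ^ μ * g y) * ENNReal.ofReal (g (x' - y))) x :=
            lintegral_congr fun x => hptw x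
        _ = ∫⁻ x in S, ENNReal.ofReal ((1 + y) ^ μ * g y) * ENNReal.ofReal (g (x - y)) := by
            rw [setLIntegral_indicator hSmeas',
              inter_eq_self_of_subset_left
                (fun x hx => hEsub (mem_of_mem_inter_left hx))]
        _ = ENNReal.ofReal ((1 + y) ^ μ * g y) * ∫⁻ x in S, ENNReal.ofReal (g (x - y)) :=
            lintegral_const_mul' _ _ ENNReal.ofReal_ne_top
        _ = ENNReal.ofReal ((1 + y) ^ μ * g y) * ∫⁻ z in S', ENNReal.ofReal (g z) := by
            congr 1
            rw [← lintegral_indicator hSmeas', ← lintegral_indicator hS'meas]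
            have htr := lintegral_add_right_eq_self
              (μ := volume) (fun x => S.indicator (fun x' => ENNReal.ofReal (g (x' - y))) x) y
            rw [← htr]
            apply lintegral_congr
            intro z
            rcases em (z + y ∈ S) with h | h
            · rw [Set.indicator_of_mem h, Set.indicator_of_mem (show z ∈ S' from h)]
              simp
            · rw [Set.indicator_of_notMem h, Set.indicator_of_notMem (show z ∉ S' from h)]
        _ ≤ ENNReal.ofReal ((1 + y) ^ μ * g y) * ENNReal.ofReal p :=
            mul_le_mul_right (hkey S' hS'meas hS'sub hS'vol) _
    · rw [Set.indicator_of_notMem hy]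
      refine le_of_eq ?_
      calc (∫⁻ x in Ioo (0:ℝ) R, E.indicator (fun _ => (1:ℝ≥0∞)) x *
            (Ioo (0:ℝ) x).indicator
              (fun y' => ENNReal.ofReal ((1 + y') ^ μ * g y') * ENNReal.ofReal (g (x - y'))) y)
          = ∫⁻ _x in Ioo (0:ℝ) R, (0:ℝ≥0∞) := by
            refine setLIntegral_congr_fun measurableSet_Ioo ?_
            intro x hx
            beta_reduce
            by_cases hxE : x ∈ E
            · have hxR := (hEsub hxE).2
              have hnm : y ∉ Ioo (0:ℝ) x := by
                intro hyx
                exact hy ⟨hyx.1, lt_trans hyx.2 hxR⟩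
              rw [Set.indicator_of_notMem hnm, mul_zero]
            · rw [Set.indicator_of_notMem hxE, zero_mul]
        _ = 0 := lintegral_zero
  -- Step F: conclude the outer estimate
  have houter : (∫⁻ y, ∫⁻ x in Ioo (0:ℝ) R, E.indicator (fun _ => (1:ℝ≥0∞)) x *
        (Ioo (0:ℝ) x).indicator
          (fun y' => ENNReal.ofReal ((1 + y') ^ μ * g y') * ENNReal.ofReal (g (x - y'))) y)
      ≤ ENNReal.ofReal L * ENNReal.ofReal p := by
    calc (∫⁻ y, ∫⁻ x in Ioo (0:ℝ) R, E.indicator (fun _ => (1:ℝ≥0∞)) x *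
          (Ioo (0:ℝ) x).indicator
            (fun y' => ENNReal.ofReal ((1 + y') ^ μ * g y') * ENNReal.ofReal (g (x - y'))) y)
        ≤ ∫⁻ y, (Ioo (0:ℝ) R).indicator
            (fun y' => ENNReal.ofReal ((1 + y') ^ μ * g y') * ENNReal.ofReal p) y :=
          lintegral_mono hinner
      _ = ∫⁻ y in Ioo (0:ℝ) R, ENNReal.ofReal ((1 + y) ^ μ * g y) * ENNReal.ofReal p :=
          lintegral_indicator measurableSet_Ioo _
      _ = (∫⁻ y in Ioo (0:ℝ) R, ENNReal.ofReal ((1 + y) ^ μ * g y)) * ENNReal.ofReal p :=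
          lintegral_mul_const' _ _ ENNReal.ofReal_ne_top
      _ = ENNReal.ofReal (∫ y in Ioo (0:ℝ) R, (1 + y) ^ μ * g y) * ENNReal.ofReal p := by
          rw [ofReal_integral_eq_lintegral_ofReal hgint ?_]
          filter_upwards [ae_restrict_mem measurableSet_Ioo] with y hy
          exact mul_nonneg (Real.rpow_nonneg (by linarith [hy.1]) μ) (hgnn y)
      _ ≤ ENNReal.ofReal L * ENNReal.ofReal p :=
          mul_le_mul_left (ENNReal.ofReal_le_ofReal hgL) _
  -- final assembly
  have hfinal : (∫⁻ x in Ioo (0:ℝ) R, ENNReal.ofReal (E.indicator (fun _ => (1:ℝ)) x *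
        ∫ y in Ioo (0:ℝ) x, K (x - y) y * g (x - y) * g y))
      ≤ ENNReal.ofReal (C * (L * p)) := by
    calc (∫⁻ x in Ioo (0:ℝ) R, ENNReal.ofReal (E.indicator (fun _ => (1:ℝ)) x *
          ∫ y in Ioo (0:ℝ) x, K (x - y) y * g (x - y) * g y))
        ≤ ∫⁻ x in Ioo (0:ℝ) R, E.indicator (fun _ => (1:ℝ≥0∞)) x *
            ∫⁻ y in Ioo (0:ℝ) x, ENNReal.ofReal (K (x - y) y * g (x - y) * g y) :=
          lintegral_mono fun x => hB x
      _ ≤ ENNReal.ofReal C * ∫⁻ x in Ioo (0:ℝ) R, E.indicator (fun _ => (1:ℝ≥0∞)) x *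
            ∫⁻ y in Ioo (0:ℝ) x, ENNReal.ofReal ((1 + y) ^ μ * g y) * ENNReal.ofReal (g (x - y)) :=
          hTC
      _ = ENNReal.ofReal C * ∫⁻ y, ∫⁻ x in Ioo (0:ℝ) R, E.indicator (fun _ => (1:ℝ≥0∞)) x *
            (Ioo (0:ℝ) x).indicator
              (fun y' => ENNReal.ofReal ((1 + y') ^ μ * g y') * ENNReal.ofReal (g (x - y'))) y := by
          rw [hswap]
      _ ≤ ENNReal.ofReal C * (ENNReal.ofReal L * ENNReal.ofReal p) :=
          mul_le_mul_right houter _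
      _ = ENNReal.ofReal (C * (L * p)) := by
          rw [ENNReal.ofReal_mul hC0, ENNReal.ofReal_mul hL.le]
  rw [hA]
  have hCLp : (0:ℝ) ≤ C * (L * p) := mul_nonneg hC0 (mul_nonneg hL.le hp0)
  have := ENNReal.toReal_le_of_le_ofReal hCLp hfinal
  calc (∫⁻ x in Ioo (0:ℝ) R, ENNReal.ofReal (E.indicator (fun _ => (1:ℝ)) x *
        ∫ y in Ioo (0:ℝ) x, K (x - y) y * g (x - y) * g y)).toReal
      ≤ C * (L * p) := this
    _ = k₁ ^ 2 * (1 + R) ^ μ * L * p := by rw [hCdef]; ring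
end

section
/- Assume K satisfies (H1)-(H2) and for n ≥ 1 set Kₙ(x,y) = K(x,y) if x+y < n and 0 otherwise. Let (gⁿ) be a sequence in X⁺ with ‖gⁿ‖ ≤ L for all n, and let g ∈ X⁺ be such that gⁿ ⇀ g weakly in L¹(0,∞) as n → ∞. Then for every R > 0, the truncated coagulation loss terms converge weakly: Q₂ⁿ(gⁿ) ⇀ Q₂(g) in L¹(0,R) as n → ∞, where Q₂ⁿ(g)(x) = ∫₀^{n−x} Kₙ(x,y)g(x)g(y)dy and Q₂(g)(x) = ∫₀^∞ K(x,y)g(x)g(y)dy. -/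
open MeasureTheory Set Filter

/-- The truncated coagulation kernel `Kₙ`. -/
noncomputable def Ktr (K : ℝ → ℝ → ℝ) (n : ℕ) (x y : ℝ) : ℝ :=
  if x + y < n then K x y else 0

open Topology


/-- Absolute continuity of the integral, ε-δ form. -/
lemma my_abscont {α : Type*} [MeasurableSpace α] {μ : Measure α} {h : α → ℝ}
    (hint : Integrable h μ) {ε : ℝ} (hε : 0 < ε) :
    ∃ δ > (0:ℝ), ∀ F : Set α, μ F ≤ ENNReal.ofReal δ → ∫ x in F, |h x| ∂μ ≤ ε := by
  have hfin : ∫⁻ x, ‖h x‖₊ ∂μ ≠ ⊤ := hint.2.ne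
  obtain ⟨δ, hδ0, hδ⟩ := exists_pos_setLIntegral_lt_of_measure_lt hfin
    (ε := ENNReal.ofReal ε) (by simp [hε])
  obtain ⟨r, hr0, hrδ⟩ := ENNReal.lt_iff_exists_nnreal_btwn.1 hδ0
  refine ⟨r, by exact_mod_cast hr0, fun F hF => ?_⟩
  have hFr : μ F < δ := lt_of_le_of_lt (by rwa [ENNReal.ofReal_coe_nnreal] at hF) hrδ
  have h1 : ∫ x in F, |h x| ∂μ = (∫⁻ x in F, ‖h x‖₊ ∂μ).toReal := by
    rw [show (fun x => |h x|) = fun x => ‖h x‖ by simp [Real.norm_eq_abs]]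
    exact integral_norm_eq_lintegral_enorm (hint.aestronglyMeasurable.restrict)
  rw [h1]
  exact ENNReal.toReal_le_of_le_ofReal hε.le (hδ F hFr).le

/-- Bound for inner integrals against a weight dominated by `c * (1+y)`. -/
lemma my_inner_bound {W f : ℝ → ℝ} {c : ℝ} {s : Set ℝ} (hc : 0 ≤ c)
    (hs : s ⊆ Ioi (0:ℝ)) (hsm : MeasurableSet s)
    (hW : ∀ y ∈ s, |W y| ≤ c * (1 + y))
    (hf : IntegrableOn (fun y => (1 + y) * |f y|) (Ioi (0:ℝ))) :
    |∫ y in s, W y * f y| ≤ c * ∫ y in Ioi (0:ℝ), (1 + y) * |f y| := by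
  have h1 : |∫ y in s, W y * f y| ≤ ∫ y in s, |W y * f y| := by
    have := norm_integral_le_integral_norm (μ := volume.restrict s) (fun y => W y * f y)
    simpa only [Real.norm_eq_abs] using this
  have h2 : ∫ y in s, |W y * f y| ≤ ∫ y in s, c * ((1 + y) * |f y|) := by
    refine integral_mono_of_nonneg (Filter.Eventually.of_forall fun y => abs_nonneg _)
      ((hf.mono_set hs).const_mul c) ?_
    filter_upwards [self_mem_ae_restrict hsm] with y hy
    rw [abs_mul]
    calc |W y| * |f y| ≤ (c * (1 + y)) * |f y| :=
          mul_le_mul_of_nonneg_right (hW y hy) (abs_nonneg _)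
      _ = c * ((1 + y) * |f y|) := by ring
  have h3 : ∫ y in s, c * ((1 + y) * |f y|) = c * ∫ y in s, (1 + y) * |f y| :=
    integral_const_mul c _
  have h4 : ∫ y in s, (1 + y) * |f y| ≤ ∫ y in Ioi (0:ℝ), (1 + y) * |f y| := by
    refine setIntegral_mono_set hf ?_ (HasSubset.Subset.eventuallyLE hs)
    filter_upwards [self_mem_ae_restrict measurableSet_Ioi] with y hy
    have : (0:ℝ) < y := hy
    positivity
  calc |∫ y in s, W y * f y| ≤ ∫ y in s, c * ((1 + y) * |f y|) := h1.trans h2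
    _ = c * ∫ y in s, (1 + y) * |f y| := h3
    _ ≤ c * ∫ y in Ioi (0:ℝ), (1 + y) * |f y| := mul_le_mul_of_nonneg_left h4 hc

/-- Restricting the restricted measure to a subset of `Ioi 0`. -/
lemma my_restr {F : Set ℝ} (hFm : MeasurableSet F) (hFs : F ⊆ Ioi (0:ℝ)) (f : ℝ → ℝ) :
    ∫ x in F, f x ∂(volume.restrict (Ioi (0:ℝ))) = ∫ x in F, f x := by
  rw [Measure.restrict_restrict hFm, inter_eq_self_of_subset_left hFs]

lemma my_restr_meas {F : Set ℝ} (hFm : MeasurableSet F) (hFs : F ⊆ Ioi (0:ℝ)) :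
    (volume.restrict (Ioi (0:ℝ))) F = volume F := by
  rw [Measure.restrict_apply hFm, inter_eq_self_of_subset_left hFs]

/-- Uniform integrability of a nonnegative, weakly convergent sequence. -/
lemma my_ui (gn : ℕ → ℝ → ℝ) (g : ℝ → ℝ)
    (hgnint : ∀ n, IntegrableOn (gn n) (Ioi (0:ℝ)))
    (hgnnn : ∀ n, ∀ᵐ x ∂(volume.restrict (Ioi (0:ℝ))), 0 ≤ gn n x)
    (hgint : IntegrableOn g (Ioi (0:ℝ)))
    (hgnn : ∀ᵐ x ∂(volume.restrict (Ioi (0:ℝ))), 0 ≤ g x)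
    (hconv : ∀ F : Set ℝ, MeasurableSet F → F ⊆ Ioi 0 →
      Tendsto (fun n => ∫ x in F, gn n x) atTop (𝓝 (∫ x in F, g x)))
    {ε : ℝ} (hε : 0 < ε) :
    ∃ δ > (0:ℝ), ∀ n, ∀ F : Set ℝ, MeasurableSet F → F ⊆ Ioi 0 →
      volume F ≤ ENNReal.ofReal δ → ∫ x in F, |gn n x| ≤ ε := by
  by_contra hcon
  push_neg at hcon
  -- hcon : ∀ δ > 0, ∃ n F, MeasurableSet F ∧ F ⊆ Ioi 0 ∧ volume F ≤ ofReal δ ∧ ε < ∫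
  choose! nδ Fδ hmδ hsδ hvδ hgtδ using fun δ hδ => hcon δ hδ
  -- absolute continuity for each gn m
  have habs : ∀ m : ℕ, ∃ δ > (0:ℝ), ∀ F : Set ℝ, MeasurableSet F → F ⊆ Ioi 0 →
      volume F ≤ ENNReal.ofReal δ → ∫ x in F, |gn m x| ≤ ε := by
    intro m
    obtain ⟨δ, hδ0, hδ⟩ := my_abscont (hgnint m) hε
    refine ⟨δ, hδ0, fun F hFm hFs hFv => ?_⟩
    have := hδ F (by rw [my_restr_meas hFm hFs]; exact hFv)
    rwa [my_restr hFm hFs] at this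
  choose δf hδf0 hδf using habs
  -- absolute continuity for g, at scale ε/4 * (1/2)^k
  have habsg : ∀ k : ℕ, ∃ δ > (0:ℝ), ∀ F : Set ℝ, MeasurableSet F → F ⊆ Ioi 0 →
      volume F ≤ ENNReal.ofReal δ → ∫ x in F, |g x| ≤ ε/4 * (1/2)^k := by
    intro k
    obtain ⟨δ, hδ0, hδ⟩ := my_abscont hgint (by positivity : (0:ℝ) < ε/4 * (1/2)^k)
    refine ⟨δ, hδ0, fun F hFm hFs hFv => ?_⟩
    have := hδ F (by rw [my_restr_meas hFm hFs]; exact hFv)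
    rwa [my_restr hFm hFs] at this
  choose δg hδg0 hδg using habsg
  -- the combined δ at stage k
  have hne : ∀ k : ℕ, (Finset.range (k+1)).Nonempty := fun k => ⟨0, by simp⟩
  set δt : ℕ → ℝ := fun k => min ((Finset.range (k+1)).inf' (hne k) δf) (δg k) with hδt
  have hδt0 : ∀ k, 0 < δt k := by
    intro k
    refine lt_min ?_ (hδg0 k)
    rw [Finset.lt_inf'_iff]
    exact fun i _ => hδf0 i
  set Nk : ℕ → ℕ := fun k => nδ (δt k) with hNk
  set Fk : ℕ → Set ℝ := fun k => Fδ (δt k) with hFk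
  have hFkm : ∀ k, MeasurableSet (Fk k) := fun k => hmδ _ (hδt0 k)
  have hFks : ∀ k, Fk k ⊆ Ioi 0 := fun k => hsδ _ (hδt0 k)
  have hFkv : ∀ k, volume (Fk k) ≤ ENNReal.ofReal (δt k) := fun k => hvδ _ (hδt0 k)
  have hFkgt : ∀ k, ε < ∫ x in Fk k, |gn (Nk k) x| := fun k => hgtδ _ (hδt0 k)
  -- Nk k > k
  have hNkgt : ∀ k, k < Nk k := by
    intro k
    by_contra hle
    push_neg at hle
    have h1 : δt k ≤ δf (Nk k) := le_trans (min_le_left _ _)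
      (Finset.inf'_le _ (Finset.mem_range.2 (Nat.lt_succ_of_le hle)))
    have h2 : volume (Fk k) ≤ ENNReal.ofReal (δf (Nk k)) :=
      le_trans (hFkv k) (ENNReal.ofReal_le_ofReal h1)
    exact absurd (hδf (Nk k) (Fk k) (hFkm k) (hFks k) h2) (not_le.2 (hFkgt k))
  -- the union
  set F : Set ℝ := ⋃ k, Fk k with hF
  have hFm : MeasurableSet F := MeasurableSet.iUnion hFkm
  have hFs : F ⊆ Ioi 0 := iUnion_subset hFks
  -- ∫_F |g| ≤ ε/2
  have hgF : ∫ x in F, |g x| ≤ ε/2 := by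
    have hlin : ∫⁻ x in F, ‖g x‖₊ ≤ ∑' k, ∫⁻ x in Fk k, ‖g x‖₊ :=
      lintegral_iUnion_le _ _
    have hterm : ∀ k, ∫⁻ x in Fk k, ‖g x‖₊ ≤ ENNReal.ofReal (ε/4 * (1/2)^k) := by
      intro k
      have hik : Integrable g (volume.restrict (Fk k)) :=
        hgint.mono_set (hFks k)
      have : ENNReal.ofReal (∫ x in Fk k, ‖g x‖) = ∫⁻ x in Fk k, ‖g x‖₊ :=
        ofReal_integral_norm_eq_lintegral_enorm hik
      rw [← this]
      refine ENNReal.ofReal_le_ofReal ?_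
      have hb := hδg k (Fk k) (hFkm k) (hFks k)
        (le_trans (hFkv k) (ENNReal.ofReal_le_ofReal (min_le_right _ _)))
      simpa only [Real.norm_eq_abs] using hb
    have hsum : ∑' k, ∫⁻ x in Fk k, ‖g x‖₊ ≤ ENNReal.ofReal (ε/2) := by
      calc ∑' k, ∫⁻ x in Fk k, ‖g x‖₊ ≤ ∑' k, ENNReal.ofReal (ε/4 * (1/2)^k) :=
            ENNReal.tsum_le_tsum hterm
        _ = ENNReal.ofReal (∑' k : ℕ, ε/4 * (1/2)^k) := by
            rw [ENNReal.ofReal_tsum_of_nonneg (fun k => by positivity)]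
            exact (summable_geometric_of_lt_one (by norm_num) (by norm_num)).mul_left _
        _ = ENNReal.ofReal (ε/2) := by
            rw [tsum_mul_left, tsum_geometric_of_lt_one (by norm_num) (by norm_num)]
            congr 1
            norm_num
            ring
    have heq : ∫ x in F, |g x| = (∫⁻ x in F, ‖g x‖₊).toReal := by
      rw [show (fun x => |g x|) = fun x => ‖g x‖ by simp [Real.norm_eq_abs]]
      exact integral_norm_eq_lintegral_enorm
        ((hgint.mono_set hFs).aestronglyMeasurable)
    rw [heq]
    exact ENNReal.toReal_le_of_le_ofReal (by positivity) (le_trans hlin hsum)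
  have hgF' : ∫ x in F, g x ≤ ε/2 := by
    refine le_trans ?_ hgF
    refine integral_mono_ae (hgint.mono_set hFs) (hgint.mono_set hFs).abs ?_
    exact Filter.Eventually.of_forall fun x => le_abs_self _
  -- tendsto gives eventual bound
  have hev : ∀ᶠ n in atTop, ∫ x in F, gn n x < 3/4 * ε :=
    (hconv F hFm hFs).eventually_lt_const (by linarith)
  obtain ⟨N, hN⟩ := eventually_atTop.1 hev
  -- contradiction at n = Nk N
  have hnn_F : ∀ᵐ x ∂(volume.restrict F), 0 ≤ gn (Nk N) x :=
    ae_restrict_of_ae_restrict_of_subset hFs (hgnnn _)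
  have hnn_FN : ∀ᵐ x ∂(volume.restrict (Fk N)), 0 ≤ gn (Nk N) x :=
    ae_restrict_of_ae_restrict_of_subset (hFks N) (hgnnn _)
  have h1 : ∫ x in Fk N, |gn (Nk N) x| = ∫ x in Fk N, gn (Nk N) x := by
    refine integral_congr_ae ?_
    filter_upwards [hnn_FN] with x hx
    exact abs_of_nonneg hx
  have h2 : ∫ x in Fk N, gn (Nk N) x ≤ ∫ x in F, gn (Nk N) x := by
    refine setIntegral_mono_set ((hgnint _).mono_set hFs) ?_
      (HasSubset.Subset.eventuallyLE (subset_iUnion Fk N))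
    exact hnn_F
  have h3 : ∫ x in F, gn (Nk N) x < 3/4 * ε := hN _ (le_of_lt (hNkgt N))
  have := hFkgt N
  rw [h1] at this
  linarith

lemma my_frac {a b : ℝ} (ha : 0 < a) (hb : 0 ≤ b) : a / (2 * (b + 1)) * b < a / 2 := by
  rw [div_mul_eq_mul_div, div_lt_iff₀ (by linarith)]
  nlinarith

set_option maxHeartbeats 1000000 in

/-- Lemma 2.3 for `i = 2`: if `(gⁿ)` is bounded in `X⁺` and `gⁿ ⇀ g` in `L¹(0,∞)`,
then the truncated coagulation loss terms converge weakly,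
`Q₂ⁿ(gⁿ) ⇀ Q₂(g)` in `L¹(0,R)` for every `R > 0`, where
`Q₂ⁿ(g)(x) = ∫₀^{n-x} Kₙ(x,y)g(x)g(y)dy` and
`Q₂(g)(x) = ∫₀^∞ K(x,y)g(x)g(y)dy`. -/
theorem coagulation_loss_weak_convergence
    (K : ℝ → ℝ → ℝ) (φ : ℝ → ℝ) (k₁ μ L : ℝ) (gn : ℕ → ℝ → ℝ) (g : ℝ → ℝ)
    -- (H1)
    (hKmeas : Measurable (Function.uncurry K))
    (hKnn : ∀ x y, 0 ≤ K x y)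
    (hKsymm : ∀ x, ∀ y, 0 < x → 0 < y → K x y = K y x)
    -- (H2)
    (hk₁ : 0 < k₁) (hμ0 : 0 ≤ μ) (hμ1 : μ < 1)
    (hφnn : ∀ x > (0:ℝ), 0 ≤ φ x)
    (hKbound : ∀ x > (0:ℝ), ∀ y > (0:ℝ), K x y ≤ φ x * φ y)
    (hφ : ∀ x > (0:ℝ), φ x ≤ k₁ * (1 + x) ^ μ)
    -- `(gⁿ)` is a sequence in `X⁺` with `‖gⁿ‖ ≤ L`
    (hgnmeas : ∀ n, Measurable (gn n))
    (hgnnn : ∀ n, ∀ᵐ x ∂(volume.restrict (Ioi (0:ℝ))), 0 ≤ gn n x)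
    (hgnint : ∀ n, IntegrableOn (fun x => (1 + x) * |gn n x|) (Ioi (0:ℝ)))
    (hgnL : ∀ n, (∫ x in Ioi (0:ℝ), (1 + x) * |gn n x|) ≤ L)
    -- `g ∈ X⁺`
    (hgmeas : Measurable g)
    (hgnn : ∀ᵐ x ∂(volume.restrict (Ioi (0:ℝ))), 0 ≤ g x)
    (hgint : IntegrableOn (fun x => (1 + x) * |g x|) (Ioi (0:ℝ)))
    -- `gⁿ ⇀ g` in `L¹(0,∞)`
    (hweak : ∀ ψ : ℝ → ℝ, Measurable ψ → (∃ B, ∀ x, |ψ x| ≤ B) →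
      Tendsto (fun n => ∫ x in Ioi (0:ℝ), gn n x * ψ x) atTop
        (nhds (∫ x in Ioi (0:ℝ), g x * ψ x))) :
    -- `Q₂ⁿ(gⁿ) ⇀ Q₂(g)` in `L¹(0,R)`
    ∀ R > (0:ℝ), ∀ ψ : ℝ → ℝ, Measurable ψ → (∃ B, ∀ x, |ψ x| ≤ B) →
      Tendsto (fun n : ℕ => ∫ x in Ioo (0:ℝ) R,
          (∫ y in Ioo (0:ℝ) ((n:ℝ) - x), Ktr K n x y * gn n x * gn n y) * ψ x)
        atTop
        (nhds (∫ x in Ioo (0:ℝ) R,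
          (∫ y in Ioi (0:ℝ), K x y * g x * g y) * ψ x)) := by
  intro R hR ψ hψm hψb
  obtain ⟨B, hB⟩ := hψb
  have hB0 : 0 ≤ B := le_trans (abs_nonneg _) (hB 0)
  set Lg := ∫ x in Ioi (0:ℝ), (1 + x) * |g x| with hLgdef
  -- basic positivity
  have hint_nonneg : ∀ (f : ℝ → ℝ), 0 ≤ ∫ x in Ioi (0:ℝ), (1 + x) * |f x| := by
    intro f
    refine setIntegral_nonneg measurableSet_Ioi fun x hx => ?_
    have : (0:ℝ) < x := hx
    positivity
  have hL0 : 0 ≤ L := le_trans (hint_nonneg (gn 0)) (hgnL 0)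
  have hLg0 : 0 ≤ Lg := hint_nonneg g
  -- subset facts
  have hIooIoi : Ioo (0:ℝ) R ⊆ Ioi 0 := fun x hx => hx.1
  -- plain integrability
  have hgnint' : ∀ n, IntegrableOn (gn n) (Ioi (0:ℝ)) := by
    intro n
    refine Integrable.mono' (hgnint n) ((hgnmeas n).aestronglyMeasurable.restrict) ?_
    filter_upwards [self_mem_ae_restrict measurableSet_Ioi] with x hx
    have hx0 : (0:ℝ) < x := hx
    rw [Real.norm_eq_abs]
    nlinarith [abs_nonneg (gn n x)]
  have hgint' : IntegrableOn g (Ioi (0:ℝ)) := by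
    refine Integrable.mono' hgint (hgmeas.aestronglyMeasurable.restrict) ?_
    filter_upwards [self_mem_ae_restrict measurableSet_Ioi] with x hx
    have hx0 : (0:ℝ) < x := hx
    rw [Real.norm_eq_abs]
    nlinarith [abs_nonneg (g x)]
  -- L1 norms bounded
  have hgnabsL : ∀ n, ∫ x in Ioi (0:ℝ), |gn n x| ≤ L := by
    intro n
    refine le_trans (integral_mono_ae (hgnint' n).abs (hgnint n) ?_) (hgnL n)
    filter_upwards [self_mem_ae_restrict measurableSet_Ioi] with x hx
    have hx0 : (0:ℝ) < x := hx
    nlinarith [abs_nonneg (gn n x)]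
  have hgabsLg : ∫ x in Ioi (0:ℝ), |g x| ≤ Lg := by
    refine le_trans (integral_mono_ae hgint'.abs hgint ?_) le_rfl
    filter_upwards [self_mem_ae_restrict measurableSet_Ioi] with x hx
    have hx0 : (0:ℝ) < x := hx
    nlinarith [abs_nonneg (g x)]
  have hgnLsub : ∀ n, ∀ s : Set ℝ, s ⊆ Ioi 0 → ∫ x in s, |gn n x| ≤ L := by
    intro n s hs
    refine le_trans (setIntegral_mono_set (hgnint' n).abs ?_
      (HasSubset.Subset.eventuallyLE hs)) (hgnabsL n)
    exact Filter.Eventually.of_forall fun x => abs_nonneg _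
  have hgLsub : ∀ s : Set ℝ, s ⊆ Ioi 0 → ∫ x in s, |g x| ≤ Lg := by
    intro s hs
    refine le_trans (setIntegral_mono_set hgint'.abs ?_
      (HasSubset.Subset.eventuallyLE hs)) hgabsLg
    exact Filter.Eventually.of_forall fun x => abs_nonneg _
  -- kernel bounds
  have hφ' : ∀ z : ℝ, 0 < z → φ z ≤ k₁ * (1 + z) := by
    intro z hz
    refine le_trans (hφ z hz) (mul_le_mul_of_nonneg_left ?_ hk₁.le)
    have h1 : (1 + z : ℝ) ^ μ ≤ (1 + z) ^ (1:ℝ) :=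
      Real.rpow_le_rpow_of_exponent_le (by linarith) hμ1.le
    rwa [Real.rpow_one] at h1
  have hKb : ∀ x : ℝ, 0 < x → ∀ y : ℝ, 0 < y → K x y ≤ (k₁^2 * (1 + x)) * (1 + y) := by
    intro x hx y hy
    have h1 : K x y ≤ φ x * φ y := hKbound x hx y hy
    have h2 : φ x * φ y ≤ (k₁ * (1 + x)) * (k₁ * (1 + y)) :=
      mul_le_mul (hφ' x hx) (hφ' y hy) (hφnn y hy) (by nlinarith [hk₁.le])
    nlinarith [h1, h2]
  have hKtail : ∀ A : ℝ, 1 ≤ A → ∀ x ∈ Ioo (0:ℝ) R, ∀ y ∈ Ici A,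
      K x y ≤ (k₁^2 * (1 + R) * (1 + A) ^ (μ - 1)) * (1 + y) := by
    intro A hA x hx y hy
    have hx0 : 0 < x := hx.1
    have hy0 : (0:ℝ) < y := lt_of_lt_of_le (by linarith) hy
    have h1 : K x y ≤ φ x * φ y := hKbound x hx0 y hy0
    have h2 : φ x * φ y ≤ (k₁ * (1 + x)) * (k₁ * ((1 + y) ^ μ)) := by
      refine mul_le_mul (hφ' x hx0) (hφ y hy0) (hφnn y hy0) (by nlinarith [hk₁.le])
    have h3 : (1 + y : ℝ) ^ μ = (1 + y) ^ (μ - 1) * (1 + y) := by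
      have h := Real.rpow_add (show (0:ℝ) < 1 + y by linarith) (μ - 1) 1
      rw [Real.rpow_one] at h
      rw [← h, sub_add_cancel]
    have h4 : (1 + y : ℝ) ^ (μ - 1) ≤ (1 + A) ^ (μ - 1) :=
      Real.rpow_le_rpow_of_nonpos (by linarith) (by linarith [hy.out]) (by linarith)
    have h5 : (0:ℝ) ≤ (1 + y) ^ (μ - 1) := Real.rpow_nonneg (by linarith) _
    have h6 : (1 + x : ℝ) ≤ 1 + R := by linarith [hx.2]
    calc K x y ≤ (k₁ * (1 + x)) * (k₁ * ((1 + y) ^ μ)) := h1.trans h2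
      _ = (k₁^2 * (1 + x) * (1 + y) ^ (μ - 1)) * (1 + y) := by rw [h3]; ring
      _ ≤ (k₁^2 * (1 + R) * (1 + A) ^ (μ - 1)) * (1 + y) := by
          have hk2 : (0:ℝ) ≤ k₁^2 := sq_nonneg _
          refine mul_le_mul_of_nonneg_right ?_ (by linarith)
          calc k₁^2 * (1 + x) * (1 + y) ^ (μ - 1)
              ≤ k₁^2 * (1 + R) * (1 + y) ^ (μ - 1) := by
                refine mul_le_mul_of_nonneg_right ?_ h5
                nlinarith
            _ ≤ k₁^2 * (1 + R) * (1 + A) ^ (μ - 1) := by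
                refine mul_le_mul_of_nonneg_left h4 (by nlinarith)
  -- measurability of Ktr
  have hKtrmeas : ∀ n : ℕ, Measurable (Function.uncurry (Ktr K n)) := by
    intro n
    have : Function.uncurry (Ktr K n) =
        fun p : ℝ × ℝ => if p.1 + p.2 < (n:ℝ) then Function.uncurry K p else 0 := rfl
    rw [this]
    exact Measurable.ite (measurableSet_lt (measurable_fst.add measurable_snd)
      measurable_const) hKmeas measurable_const
  have hKtr_abs : ∀ n x y, |Ktr K n x y| ≤ K x y := by
    intro n x y
    unfold Ktr
    split
    · rw [abs_of_nonneg (hKnn x y)]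
    · simpa using hKnn x y
  -- parametric measurability
  have hparam : ∀ (W : ℝ → ℝ → ℝ), Measurable (Function.uncurry W) →
      ∀ (f : ℝ → ℝ), Measurable f → ∀ (s : Set ℝ), MeasurableSet s →
      StronglyMeasurable (fun x => ∫ y in s, W x y * f y) := by
    intro W hW f hf s hs
    have h : StronglyMeasurable fun p : ℝ × ℝ => W p.1 p.2 * f p.2 :=
      (hW.mul (hf.comp measurable_snd)).stronglyMeasurable
    exact h.integral_prod_right'
  -- inner integrand integrability
  have hInner_int : ∀ (f : ℝ → ℝ), Measurable f →
      IntegrableOn (fun x => (1 + x) * |f x|) (Ioi (0:ℝ)) →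
      ∀ (x : ℝ), 0 < x → ∀ (W : ℝ → ℝ), Measurable W →
      (∀ y ∈ Ioi (0:ℝ), |W y| ≤ (k₁^2 * (1 + x)) * (1 + y)) →
      ∀ (s : Set ℝ), MeasurableSet s → s ⊆ Ioi 0 →
      IntegrableOn (fun y => W y * f y) s := by
    intro f hf hfi x hx W hWm hWb s hsm hss
    refine Integrable.mono' (((hfi.mono_set hss)).const_mul (k₁^2 * (1 + x)))
      ((hWm.mul hf).aestronglyMeasurable.restrict) ?_
    filter_upwards [self_mem_ae_restrict hsm] with y hy
    have hy0 : (0:ℝ) < y := hss hy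
    rw [Real.norm_eq_abs, abs_mul]
    calc |W y| * |f y| ≤ ((k₁^2 * (1 + x)) * (1 + y)) * |f y| :=
          mul_le_mul_of_nonneg_right (hWb y hy0) (abs_nonneg _)
      _ = k₁^2 * (1 + x) * ((1 + y) * |f y|) := by ring
  -- outer integrability
  have hOuter : ∀ (f : ℝ → ℝ), IntegrableOn f (Ioo 0 R) →
      ∀ (v : ℝ → ℝ), AEStronglyMeasurable v (volume.restrict (Ioo 0 R)) →
      ∀ (c : ℝ), (∀ x ∈ Ioo (0:ℝ) R, |v x| ≤ c) →
      IntegrableOn (fun x => f x * v x) (Ioo 0 R) := by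
    intro f hf v hv c hc
    refine Integrable.mono' (hf.abs.mul_const c)
      (hf.aestronglyMeasurable.mul hv) ?_
    filter_upwards [self_mem_ae_restrict measurableSet_Ioo] with x hx
    rw [Real.norm_eq_abs, abs_mul]
    exact mul_le_mul_of_nonneg_left (hc x hx) (abs_nonneg _)
  -- bound for inner integrals against gn resp. g
  have hIB : ∀ (W : ℝ → ℝ) (s : Set ℝ) (c : ℝ), 0 ≤ c → MeasurableSet s → s ⊆ Ioi 0 →
      (∀ y ∈ s, |W y| ≤ c * (1 + y)) → ∀ n, |∫ y in s, W y * gn n y| ≤ c * L := by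
    intro W s c hc hsm hss hW n
    exact (my_inner_bound hc hss hsm hW (hgnint n)).trans
      (mul_le_mul_of_nonneg_left (hgnL n) hc)
  have hIBg : ∀ (W : ℝ → ℝ) (s : Set ℝ) (c : ℝ), 0 ≤ c → MeasurableSet s → s ⊆ Ioi 0 →
      (∀ y ∈ s, |W y| ≤ c * (1 + y)) → |∫ y in s, W y * g y| ≤ c * Lg := by
    intro W s c hc hsm hss hW
    exact (my_inner_bound hc hss hsm hW hgint).trans le_rfl
  -- indicator integral conversion
  have hind : ∀ (s : Set ℝ), MeasurableSet s → s ⊆ Ioi 0 → ∀ (f q : ℝ → ℝ),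
      ∫ x in Ioi (0:ℝ), f x * (s.indicator q) x = ∫ x in s, f x * q x := by
    intro s hsm hss f q
    have h1 : (fun x => f x * (s.indicator q) x) = s.indicator (fun x => f x * q x) := by
      funext x
      by_cases hx : x ∈ s <;> simp [indicator, hx]
    rw [h1, integral_indicator hsm, Measure.restrict_restrict hsm,
      inter_eq_self_of_subset_left hss]
  -- weak convergence of set integrals
  have hconvF : ∀ F : Set ℝ, MeasurableSet F → F ⊆ Ioi 0 →
      Tendsto (fun n => ∫ x in F, gn n x) atTop (𝓝 (∫ x in F, g x)) := by
    intro F hFm hFs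
    have hb : ∀ x, |(F.indicator (fun _ => (1:ℝ))) x| ≤ 1 := by
      intro x
      by_cases hx : x ∈ F <;> simp [indicator, hx]
    have h := hweak (F.indicator fun _ => (1:ℝ)) (measurable_one.indicator hFm) ⟨1, hb⟩
    have e1 : ∀ f : ℝ → ℝ, ∫ x in Ioi (0:ℝ), f x * (F.indicator (fun _ => (1:ℝ))) x
        = ∫ x in F, f x := by
      intro f
      rw [hind F hFm hFs f (fun _ => (1:ℝ))]
      simp
    rw [e1 g] at h
    refine h.congr fun n => ?_
    rw [e1 (gn n)]
  -- rewriting of goal integrals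
  have hQrw : ∀ n : ℕ, (∫ x in Ioo (0:ℝ) R,
      (∫ y in Ioo (0:ℝ) ((n:ℝ) - x), Ktr K n x y * gn n x * gn n y) * ψ x)
      = ∫ x in Ioo (0:ℝ) R, gn n x * (ψ x * ∫ y in Ioi (0:ℝ), Ktr K n x y * gn n y) := by
    intro n
    refine setIntegral_congr_fun measurableSet_Ioo fun x hx => ?_
    have hiy : ∫ y in Ioo (0:ℝ) ((n:ℝ) - x), Ktr K n x y * gn n y
        = ∫ y in Ioi (0:ℝ), Ktr K n x y * gn n y := by
      have hcong : ∀ y ∈ Ioi (0:ℝ), Ktr K n x y * gn n y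
          = (Ioo (0:ℝ) ((n:ℝ) - x)).indicator (fun y => Ktr K n x y * gn n y) y := by
        intro y hy
        by_cases hlt : y < (n:ℝ) - x
        · rw [Set.indicator_of_mem (show y ∈ Ioo (0:ℝ) ((n:ℝ) - x) from ⟨hy, hlt⟩)]
        · rw [indicator_of_notMem (fun hmem => hlt hmem.2)]
          have hnot : ¬ (x + y < (n:ℝ)) := by push_neg at hlt ⊢; linarith
          simp [Ktr, hnot]
      rw [setIntegral_congr_fun measurableSet_Ioi hcong,
        integral_indicator measurableSet_Ioo, Measure.restrict_restrict measurableSet_Ioo,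
        inter_eq_self_of_subset_left Set.Ioo_subset_Ioi_self]
    have hix : ∫ y in Ioo (0:ℝ) ((n:ℝ) - x), Ktr K n x y * gn n x * gn n y
        = gn n x * ∫ y in Ioo (0:ℝ) ((n:ℝ) - x), Ktr K n x y * gn n y := by
      rw [← integral_const_mul]
      exact integral_congr_ae (Filter.Eventually.of_forall fun y => by ring)
    rw [hix, hiy]
    ring
  have hTrw : (∫ x in Ioo (0:ℝ) R, (∫ y in Ioi (0:ℝ), K x y * g x * g y) * ψ x)
      = ∫ x in Ioo (0:ℝ) R, g x * (ψ x * ∫ y in Ioi (0:ℝ), K x y * g y) := by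
    refine setIntegral_congr_fun measurableSet_Ioo fun x hx => ?_
    have hix : ∫ y in Ioi (0:ℝ), K x y * g x * g y
        = g x * ∫ y in Ioi (0:ℝ), K x y * g y := by
      rw [← integral_const_mul]
      exact integral_congr_ae (Filter.Eventually.of_forall fun y => by ring)
    rw [hix]
    ring
  -- the key limit for fixed cutoff A
  have hIciIoi : ∀ A : ℝ, 1 ≤ A → Ici A ⊆ Ioi (0:ℝ) :=
    fun A hA y hy => lt_of_lt_of_le (by linarith : (0:ℝ) < A) hy
  have hkey : ∀ A : ℝ, 1 ≤ A →
      Tendsto (fun n => ∫ x in Ioo (0:ℝ) R, gn n x * (ψ x * ∫ y in Ioo (0:ℝ) A, K x y * gn n y))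
        atTop (𝓝 (∫ x in Ioo (0:ℝ) R, g x * (ψ x * ∫ y in Ioo (0:ℝ) A, K x y * g y))) := by
    intro A hA
    have hA0 : (0:ℝ) < A := lt_of_lt_of_le one_pos hA
    have hIooA : Ioo (0:ℝ) A ⊆ Ioi 0 := Ioo_subset_Ioi_self
    set HA : ℝ → ℝ := fun x => ∫ y in Ioo (0:ℝ) A, K x y * g y with hHA
    set hAn : ℕ → ℝ → ℝ := fun n x => ∫ y in Ioo (0:ℝ) A, K x y * gn n y with hhAn
    set dd : ℕ → ℝ → ℝ := fun n x => hAn n x - HA x with hdd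
    have mHA : Measurable HA := (hparam K hKmeas g hgmeas _ measurableSet_Ioo).measurable
    have mhAn : ∀ n, Measurable (hAn n) :=
      fun n => (hparam K hKmeas (gn n) (hgnmeas n) _ measurableSet_Ioo).measurable
    have mdd : ∀ n, Measurable (dd n) := fun n => (mhAn n).sub mHA
    have hcR : (0:ℝ) ≤ k₁^2 * (1 + R) := by positivity
    have hWb : ∀ x ∈ Ioo (0:ℝ) R, ∀ y ∈ Ioo (0:ℝ) A,
        |K x y| ≤ (k₁^2 * (1 + R)) * (1 + y) := by
      intro x hx y hy
      rw [abs_of_nonneg (hKnn x y)]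
      calc K x y ≤ (k₁^2 * (1 + x)) * (1 + y) := hKb x hx.1 y hy.1
        _ ≤ (k₁^2 * (1 + R)) * (1 + y) := by
            refine mul_le_mul_of_nonneg_right ?_ (by linarith [hy.1])
            nlinarith [sq_nonneg k₁, hx.2]
    have bHA : ∀ x ∈ Ioo (0:ℝ) R, |HA x| ≤ k₁^2 * (1 + R) * Lg := fun x hx =>
      hIBg (fun y => K x y) _ _ hcR measurableSet_Ioo hIooA (hWb x hx)
    have bhAn : ∀ n, ∀ x ∈ Ioo (0:ℝ) R, |hAn n x| ≤ k₁^2 * (1 + R) * L := fun n x hx =>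
      hIB (fun y => K x y) _ _ hcR measurableSet_Ioo hIooA (hWb x hx) n
    set M : ℝ := k₁^2 * (1 + R) * (L + Lg) with hMdef
    have hM0 : 0 ≤ M := by positivity
    have bdd : ∀ n, ∀ x ∈ Ioo (0:ℝ) R, |dd n x| ≤ M := by
      intro n x hx
      have h := abs_add_le (hAn n x) (-(HA x))
      rw [← sub_eq_add_neg, abs_neg] at h
      calc |dd n x| ≤ |hAn n x| + |HA x| := h
        _ ≤ k₁^2 * (1 + R) * L + k₁^2 * (1 + R) * Lg := add_le_add (bhAn n x hx) (bHA x hx)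
        _ = M := by rw [hMdef]; ring
    -- weak convergence against ψ * HA
    set ψ₁ : ℝ → ℝ := (Ioo (0:ℝ) R).indicator (fun x => ψ x * HA x) with hψ₁
    have hψ₁m : Measurable ψ₁ := (hψm.mul mHA).indicator measurableSet_Ioo
    have hψ₁b : ∀ x, |ψ₁ x| ≤ B * (k₁^2 * (1 + R) * Lg) := by
      intro x
      by_cases hx : x ∈ Ioo (0:ℝ) R
      · rw [hψ₁, indicator_of_mem hx, abs_mul]
        exact mul_le_mul (hB x) (bHA x hx) (abs_nonneg _) hB0
      · rw [hψ₁, indicator_of_notMem hx, abs_zero]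
        positivity
    have h1 := hweak ψ₁ hψ₁m ⟨_, hψ₁b⟩
    have e1 : ∀ f : ℝ → ℝ, ∫ x in Ioi (0:ℝ), f x * ψ₁ x
        = ∫ x in Ioo (0:ℝ) R, f x * (ψ x * HA x) := by
      intro f
      rw [hψ₁]
      exact hind _ measurableSet_Ioo hIooIoi f _
    rw [e1 g] at h1
    replace h1 := h1.congr fun n => e1 (gn n)
    -- dd tends to 0 pointwise
    have hddto : ∀ x ∈ Ioo (0:ℝ) R, Tendsto (fun n => dd n x) atTop (𝓝 0) := by
      intro x hx
      have hx0 : 0 < x := hx.1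
      set ψx : ℝ → ℝ := (Ioo (0:ℝ) A).indicator (fun y => K x y) with hψx
      have hψxm : Measurable ψx :=
        (hKmeas.comp measurable_prodMk_left).indicator measurableSet_Ioo
      have hψxb : ∀ y, |ψx y| ≤ k₁^2 * (1 + x) * (1 + A) := by
        intro y
        by_cases hy : y ∈ Ioo (0:ℝ) A
        · rw [hψx, indicator_of_mem hy, abs_of_nonneg (hKnn x y)]
          calc K x y ≤ (k₁^2 * (1 + x)) * (1 + y) := hKb x hx0 y hy.1
            _ ≤ k₁^2 * (1 + x) * (1 + A) := by
                refine mul_le_mul_of_nonneg_left (by linarith [hy.2]) (by positivity)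
        · rw [hψx, indicator_of_notMem hy, abs_zero]
          positivity
      have h2 := hweak ψx hψxm ⟨_, hψxb⟩
      have e2 : ∀ f : ℝ → ℝ, ∫ y in Ioi (0:ℝ), f y * ψx y
          = ∫ y in Ioo (0:ℝ) A, K x y * f y := by
        intro f
        rw [hψx, hind _ measurableSet_Ioo hIooA f _]
        exact setIntegral_congr_fun measurableSet_Ioo fun y hy => mul_comm _ _
      rw [e2 g] at h2
      replace h2 := h2.congr fun n => e2 (gn n)
      have h3 := h2.sub_const (∫ y in Ioo (0:ℝ) A, K x y * g y)
      rw [sub_self] at h3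
      exact h3
    -- integrability of |gn| * |dd| on (0,R)
    have hEnint : ∀ n, IntegrableOn (fun x => |gn n x| * |dd n x|) (Ioo (0:ℝ) R) := by
      intro n
      refine Integrable.mono' (((hgnint' n).mono_set hIooIoi).abs.mul_const M)
        (((hgnmeas n).abs.mul (mdd n).abs).aestronglyMeasurable.restrict) ?_
      filter_upwards [self_mem_ae_restrict measurableSet_Ioo] with x hx
      rw [Real.norm_eq_abs, abs_mul, abs_abs, abs_abs]
      exact mul_le_mul_of_nonneg_left (bdd n x hx) (abs_nonneg _)
    -- the error term tends to 0
    have hEn : Tendsto (fun n => ∫ x in Ioo (0:ℝ) R, |gn n x| * |dd n x|) atTop (𝓝 0) := by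
      rw [NormedAddCommGroup.tendsto_nhds_zero]
      intro ε' hε'
      have hM1 : (0:ℝ) < M + 1 := by linarith
      have hL1 : (0:ℝ) < L + 1 := by linarith
      set ε₁ : ℝ := ε' / (2 * (L + 1)) with hε₁def
      have hε₁0 : 0 < ε₁ := by positivity
      obtain ⟨δ, hδ0, hδ⟩ := my_ui gn g hgnint' hgnnn hgint' hgnn hconvF
        (show 0 < ε' / (2 * (M + 1)) by positivity)
      have hTnm : ∀ n, MeasurableSet {z : ℝ | ε₁ ≤ |dd n z|} :=
        fun n => measurableSet_le measurable_const (mdd n).abs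
      haveI : IsFiniteMeasure (volume.restrict (Ioo (0:ℝ) R)) := by
        refine ⟨?_⟩
        rw [Measure.restrict_apply_univ, Real.volume_Ioo]
        exact ENNReal.ofReal_lt_top
      have htim : TendstoInMeasure (volume.restrict (Ioo (0:ℝ) R)) dd atTop
          (fun _ => (0:ℝ)) := by
        refine tendstoInMeasure_of_tendsto_ae
          (fun n => (mdd n).aestronglyMeasurable.restrict) ?_
        filter_upwards [self_mem_ae_restrict measurableSet_Ioo] with x hx
        exact hddto x hx
      have hms := htim (ENNReal.ofReal ε₁) (ENNReal.ofReal_pos.2 hε₁0)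
      simp only [edist_dist, dist_zero_right, Real.norm_eq_abs,
        ENNReal.ofReal_le_ofReal_iff (abs_nonneg _)] at hms
      have hev2 : ∀ᶠ n in atTop,
          (volume.restrict (Ioo (0:ℝ) R)) {z | ε₁ ≤ |dd n z|} < ENNReal.ofReal δ :=
        hms.eventually_lt_const (ENNReal.ofReal_pos.2 hδ0)
      filter_upwards [hev2] with n hn
      set S : Set ℝ := {z : ℝ | ε₁ ≤ |dd n z|} with hSdef
      have hvolS : volume (Ioo (0:ℝ) R ∩ S) ≤ ENNReal.ofReal δ := by
        rw [Measure.restrict_apply (hTnm n)] at hn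
        calc volume (Ioo (0:ℝ) R ∩ S) = volume (S ∩ Ioo (0:ℝ) R) := by rw [inter_comm]
          _ ≤ ENNReal.ofReal δ := hn.le
      have hsub1 : Ioo (0:ℝ) R ∩ S ⊆ Ioi 0 := fun z hz => hIooIoi hz.1
      have hsub2 : Ioo (0:ℝ) R \ S ⊆ Ioi 0 := fun z hz => hIooIoi hz.1
      have hint1 := hδ n (Ioo (0:ℝ) R ∩ S) (measurableSet_Ioo.inter (hTnm n)) hsub1 hvolS
      have hsplitE : ∫ x in Ioo (0:ℝ) R, |gn n x| * |dd n x|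
          = (∫ x in Ioo (0:ℝ) R ∩ S, |gn n x| * |dd n x|)
            + ∫ x in Ioo (0:ℝ) R \ S, |gn n x| * |dd n x| :=
        (integral_inter_add_diff (hTnm n) (hEnint n)).symm
      have hb1 : ∫ x in Ioo (0:ℝ) R ∩ S, |gn n x| * |dd n x| ≤ (ε' / (2 * (M + 1))) * M := by
        calc ∫ x in Ioo (0:ℝ) R ∩ S, |gn n x| * |dd n x|
            ≤ ∫ x in Ioo (0:ℝ) R ∩ S, |gn n x| * M := by
              refine integral_mono_of_nonneg
                (Filter.Eventually.of_forall fun x => by positivity)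
                (((hgnint' n).mono_set hsub1).abs.mul_const M) ?_
              filter_upwards [self_mem_ae_restrict (measurableSet_Ioo.inter (hTnm n))] with x hx
              exact mul_le_mul_of_nonneg_left (bdd n x hx.1) (abs_nonneg _)
          _ = (∫ x in Ioo (0:ℝ) R ∩ S, |gn n x|) * M := integral_mul_const _ _
          _ ≤ (ε' / (2 * (M + 1))) * M := mul_le_mul_of_nonneg_right hint1 hM0
      have hb2 : ∫ x in Ioo (0:ℝ) R \ S, |gn n x| * |dd n x| ≤ L * ε₁ := by
        calc ∫ x in Ioo (0:ℝ) R \ S, |gn n x| * |dd n x|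
            ≤ ∫ x in Ioo (0:ℝ) R \ S, |gn n x| * ε₁ := by
              refine integral_mono_of_nonneg
                (Filter.Eventually.of_forall fun x => by positivity)
                (((hgnint' n).mono_set hsub2).abs.mul_const ε₁) ?_
              filter_upwards [self_mem_ae_restrict (measurableSet_Ioo.diff (hTnm n))] with x hx
              exact mul_le_mul_of_nonneg_left (not_le.1 hx.2).le (abs_nonneg _)
          _ = (∫ x in Ioo (0:ℝ) R \ S, |gn n x|) * ε₁ := integral_mul_const _ _
          _ ≤ L * ε₁ := mul_le_mul_of_nonneg_right (hgnLsub n _ hsub2) hε₁0.le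
      have hnn : 0 ≤ ∫ x in Ioo (0:ℝ) R, |gn n x| * |dd n x| :=
        setIntegral_nonneg measurableSet_Ioo fun x _ => by positivity
      rw [Real.norm_eq_abs, abs_of_nonneg hnn, hsplitE]
      have key1 : (ε' / (2 * (M + 1))) * M < ε' / 2 := my_frac hε' hM0
      have key2 : L * ε₁ < ε' / 2 := by
        have h := my_frac hε' hL0
        calc L * ε₁ = ε' / (2 * (L + 1)) * L := by rw [hε₁def]; ring
          _ < ε' / 2 := h
      linarith
    -- Term2 tends to 0
    have hT2 : Tendsto (fun n => ∫ x in Ioo (0:ℝ) R, gn n x * (ψ x * dd n x)) atTop (𝓝 0) := by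
      have hT2b : ∀ n, ‖∫ x in Ioo (0:ℝ) R, gn n x * (ψ x * dd n x)‖
          ≤ B * ∫ x in Ioo (0:ℝ) R, |gn n x| * |dd n x| := by
        intro n
        rw [Real.norm_eq_abs]
        calc |∫ x in Ioo (0:ℝ) R, gn n x * (ψ x * dd n x)|
            ≤ ∫ x in Ioo (0:ℝ) R, |gn n x * (ψ x * dd n x)| := by
              have := norm_integral_le_integral_norm
                (μ := volume.restrict (Ioo (0:ℝ) R)) (fun x => gn n x * (ψ x * dd n x))
              simpa only [Real.norm_eq_abs] using this
          _ ≤ ∫ x in Ioo (0:ℝ) R, B * (|gn n x| * |dd n x|) := by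
              refine integral_mono_of_nonneg
                (Filter.Eventually.of_forall fun x => abs_nonneg _)
                ((hEnint n).const_mul B) (Filter.Eventually.of_forall fun x => ?_)
              show |gn n x * (ψ x * dd n x)| ≤ B * (|gn n x| * |dd n x|)
              rw [abs_mul, abs_mul]
              calc |gn n x| * (|ψ x| * |dd n x|) ≤ |gn n x| * (B * |dd n x|) := by
                    refine mul_le_mul_of_nonneg_left
                      (mul_le_mul_of_nonneg_right (hB x) (abs_nonneg _)) (abs_nonneg _)
                _ = B * (|gn n x| * |dd n x|) := by ring
          _ = B * ∫ x in Ioo (0:ℝ) R, |gn n x| * |dd n x| := integral_const_mul _ _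
      have hBEn := hEn.const_mul B
      rw [mul_zero] at hBEn
      exact squeeze_zero_norm hT2b hBEn
    -- combine
    have int1 : ∀ n, IntegrableOn (fun x => gn n x * (ψ x * HA x)) (Ioo (0:ℝ) R) := by
      intro n
      refine hOuter (gn n) ((hgnint' n).mono_set hIooIoi) _
        ((hψm.mul mHA).aestronglyMeasurable.restrict) (B * (k₁^2 * (1 + R) * Lg)) ?_
      intro x hx
      rw [abs_mul]
      exact mul_le_mul (hB x) (bHA x hx) (abs_nonneg _) hB0
    have int2 : ∀ n, IntegrableOn (fun x => gn n x * (ψ x * dd n x)) (Ioo (0:ℝ) R) := by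
      intro n
      refine hOuter (gn n) ((hgnint' n).mono_set hIooIoi) _
        ((hψm.mul (mdd n)).aestronglyMeasurable.restrict) (B * M) ?_
      intro x hx
      rw [abs_mul]
      exact mul_le_mul (hB x) (bdd n x hx) (abs_nonneg _) hB0
    have hsplit2 : ∀ n, (∫ x in Ioo (0:ℝ) R, gn n x * (ψ x * hAn n x))
        = (∫ x in Ioo (0:ℝ) R, gn n x * (ψ x * HA x))
          + ∫ x in Ioo (0:ℝ) R, gn n x * (ψ x * dd n x) := by
      intro n
      rw [← integral_add (int1 n) (int2 n)]
      refine setIntegral_congr_fun measurableSet_Ioo fun x hx => ?_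
      have : dd n x = hAn n x - HA x := rfl
      rw [this]
      ring
    have hfin := h1.add hT2
    rw [add_zero] at hfin
    exact hfin.congr fun n => (hsplit2 n).symm
  -- uniform kernel bounds on (0,R) × (0,∞)
  have hKbR : ∀ x ∈ Ioo (0:ℝ) R, ∀ y ∈ Ioi (0:ℝ), |K x y| ≤ (k₁^2 * (1 + R)) * (1 + y) := by
    intro x hx y hy
    rw [abs_of_nonneg (hKnn x y)]
    refine (hKb x hx.1 y hy).trans ?_
    refine mul_le_mul_of_nonneg_right ?_ (by linarith [mem_Ioi.1 hy])
    nlinarith [sq_nonneg k₁, hx.2]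
  have hKtrbR : ∀ m : ℕ, ∀ x ∈ Ioo (0:ℝ) R, ∀ y ∈ Ioi (0:ℝ),
      |Ktr K m x y| ≤ (k₁^2 * (1 + R)) * (1 + y) :=
    fun m x hx y hy => (hKtr_abs m x y).trans ((le_abs_self _).trans (hKbR x hx y hy))
  -- tail estimate for the truncated terms
  have htail1 : ∀ A : ℝ, 1 ≤ A → ∀ n : ℕ, R + A ≤ (n:ℝ) →
      |(∫ x in Ioo (0:ℝ) R, gn n x * (ψ x * ∫ y in Ioi (0:ℝ), Ktr K n x y * gn n y))
        - ∫ x in Ioo (0:ℝ) R, gn n x * (ψ x * ∫ y in Ioo (0:ℝ) A, K x y * gn n y)|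
      ≤ (B * (k₁^2 * (1 + R)) * L * L) * (1 + A) ^ (μ - 1) := by
    intro A hA n hn
    have hA0 : (0:ℝ) < A := lt_of_lt_of_le one_pos hA
    have hIooA : Ioo (0:ℝ) A ⊆ Ioi 0 := Ioo_subset_Ioi_self
    have hrp0 : (0:ℝ) ≤ (1 + A) ^ (μ - 1) := Real.rpow_nonneg (by linarith) _
    have hcA0 : (0:ℝ) ≤ k₁^2 * (1 + R) * (1 + A) ^ (μ - 1) := by positivity
    -- difference of inner integrals is the tail
    have hinsp : ∀ x ∈ Ioo (0:ℝ) R, (∫ y in Ioi (0:ℝ), Ktr K n x y * gn n y)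
        - (∫ y in Ioo (0:ℝ) A, K x y * gn n y) = ∫ y in Ici A, Ktr K n x y * gn n y := by
      intro x hx
      have hx0 : 0 < x := hx.1
      have hKtrm : Measurable fun y => Ktr K n x y :=
        (hKtrmeas n).comp measurable_prodMk_left
      have hKtrb' : ∀ y ∈ Ioi (0:ℝ), |Ktr K n x y| ≤ (k₁^2 * (1 + x)) * (1 + y) :=
        fun y hy => (hKtr_abs n x y).trans (hKb x hx0 y hy)
      have hi1 : IntegrableOn (fun y => Ktr K n x y * gn n y) (Ioo (0:ℝ) A) :=
        hInner_int (gn n) (hgnmeas n) (hgnint n) x hx0 _ hKtrm hKtrb' _ measurableSet_Ioo hIooA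
      have hi2 : IntegrableOn (fun y => Ktr K n x y * gn n y) (Ici A) :=
        hInner_int (gn n) (hgnmeas n) (hgnint n) x hx0 _ hKtrm hKtrb' _ measurableSet_Ici
          (hIciIoi A hA)
      have hdisj : Disjoint (Ioo (0:ℝ) A) (Ici A) :=
        disjoint_left.2 fun y hy hy' => absurd hy.2 (not_lt.2 hy')
      have hsp : ∫ y in Ioi (0:ℝ), Ktr K n x y * gn n y
          = (∫ y in Ioo (0:ℝ) A, Ktr K n x y * gn n y)
            + ∫ y in Ici A, Ktr K n x y * gn n y := by
        rw [← Ioo_union_Ici_eq_Ioi hA0]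
        exact setIntegral_union hdisj measurableSet_Ici hi1 hi2
      have hcong : ∫ y in Ioo (0:ℝ) A, Ktr K n x y * gn n y
          = ∫ y in Ioo (0:ℝ) A, K x y * gn n y := by
        refine setIntegral_congr_fun measurableSet_Ioo fun y hy => ?_
        have hxy : x + y < (n:ℝ) := by
          have h1 := hx.2
          have h2 := hy.2
          linarith
        simp [Ktr, hxy]
      rw [hsp, hcong]
      ring
    -- integrability of both outer integrands
    have hoi1 : IntegrableOn
        (fun x => gn n x * (ψ x * ∫ y in Ioi (0:ℝ), Ktr K n x y * gn n y)) (Ioo 0 R) := by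
      refine hOuter (gn n) ((hgnint' n).mono_set hIooIoi) _
        ((hψm.mul (hparam (Ktr K n) (hKtrmeas n) (gn n) (hgnmeas n) _
          measurableSet_Ioi).measurable).aestronglyMeasurable.restrict)
        (B * ((k₁^2 * (1 + R)) * L)) ?_
      intro x hx
      rw [abs_mul]
      refine mul_le_mul (hB x) ?_ (abs_nonneg _) hB0
      exact hIB _ _ _ (by positivity) measurableSet_Ioi subset_rfl (hKtrbR n x hx) n
    have hoi2 : IntegrableOn
        (fun x => gn n x * (ψ x * ∫ y in Ioo (0:ℝ) A, K x y * gn n y)) (Ioo 0 R) := by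
      refine hOuter (gn n) ((hgnint' n).mono_set hIooIoi) _
        ((hψm.mul (hparam K hKmeas (gn n) (hgnmeas n) _
          measurableSet_Ioo).measurable).aestronglyMeasurable.restrict)
        (B * ((k₁^2 * (1 + R)) * L)) ?_
      intro x hx
      rw [abs_mul]
      refine mul_le_mul (hB x) ?_ (abs_nonneg _) hB0
      exact hIB _ _ _ (by positivity) measurableSet_Ioo hIooA
        (fun y hy => hKbR x hx y (hIooA hy)) n
    rw [← integral_sub hoi1 hoi2]
    calc |∫ x in Ioo (0:ℝ) R, (gn n x * (ψ x * ∫ y in Ioi (0:ℝ), Ktr K n x y * gn n y)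
            - gn n x * (ψ x * ∫ y in Ioo (0:ℝ) A, K x y * gn n y))|
        ≤ ∫ x in Ioo (0:ℝ) R, |gn n x * (ψ x * ∫ y in Ioi (0:ℝ), Ktr K n x y * gn n y)
            - gn n x * (ψ x * ∫ y in Ioo (0:ℝ) A, K x y * gn n y)| := by
          have := norm_integral_le_integral_norm (μ := volume.restrict (Ioo (0:ℝ) R))
            (fun x => gn n x * (ψ x * ∫ y in Ioi (0:ℝ), Ktr K n x y * gn n y)
              - gn n x * (ψ x * ∫ y in Ioo (0:ℝ) A, K x y * gn n y))
          simpa only [Real.norm_eq_abs] using this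
      _ ≤ ∫ x in Ioo (0:ℝ) R,
            (B * ((k₁^2 * (1 + R) * (1 + A) ^ (μ - 1)) * L)) * |gn n x| := by
          refine integral_mono_of_nonneg
            (Filter.Eventually.of_forall fun x => abs_nonneg _)
            (((hgnint' n).mono_set hIooIoi).abs.const_mul _) ?_
          filter_upwards [self_mem_ae_restrict measurableSet_Ioo] with x hx
          have heq : gn n x * (ψ x * ∫ y in Ioi (0:ℝ), Ktr K n x y * gn n y)
              - gn n x * (ψ x * ∫ y in Ioo (0:ℝ) A, K x y * gn n y)
              = (gn n x * ψ x) * ((∫ y in Ioi (0:ℝ), Ktr K n x y * gn n y)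
                - ∫ y in Ioo (0:ℝ) A, K x y * gn n y) := by ring
          rw [heq, hinsp x hx, abs_mul, abs_mul]
          have htb : |∫ y in Ici A, Ktr K n x y * gn n y|
              ≤ (k₁^2 * (1 + R) * (1 + A) ^ (μ - 1)) * L :=
            hIB _ _ _ hcA0 measurableSet_Ici (hIciIoi A hA)
              (fun y hy => (hKtr_abs n x y).trans (hKtail A hA x hx y hy)) n
          calc |gn n x| * |ψ x| * |∫ y in Ici A, Ktr K n x y * gn n y|
              ≤ (|gn n x| * B) * ((k₁^2 * (1 + R) * (1 + A) ^ (μ - 1)) * L) := by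
                refine mul_le_mul (mul_le_mul_of_nonneg_left (hB x) (abs_nonneg _)) htb
                  (abs_nonneg _) (by positivity)
            _ = (B * ((k₁^2 * (1 + R) * (1 + A) ^ (μ - 1)) * L)) * |gn n x| := by ring
      _ = (B * ((k₁^2 * (1 + R) * (1 + A) ^ (μ - 1)) * L)) * ∫ x in Ioo (0:ℝ) R, |gn n x| :=
          integral_const_mul _ _
      _ ≤ (B * ((k₁^2 * (1 + R) * (1 + A) ^ (μ - 1)) * L)) * L := by
          refine mul_le_mul_of_nonneg_left (hgnLsub n _ hIooIoi) (by positivity)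
      _ = (B * (k₁^2 * (1 + R)) * L * L) * (1 + A) ^ (μ - 1) := by ring
  -- tail estimate for the limit term
  have htail2 : ∀ A : ℝ, 1 ≤ A →
      |(∫ x in Ioo (0:ℝ) R, g x * (ψ x * ∫ y in Ioi (0:ℝ), K x y * g y))
        - ∫ x in Ioo (0:ℝ) R, g x * (ψ x * ∫ y in Ioo (0:ℝ) A, K x y * g y)|
      ≤ (B * (k₁^2 * (1 + R)) * Lg * Lg) * (1 + A) ^ (μ - 1) := by
    intro A hA
    have hA0 : (0:ℝ) < A := lt_of_lt_of_le one_pos hA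
    have hIooA : Ioo (0:ℝ) A ⊆ Ioi 0 := Ioo_subset_Ioi_self
    have hrp0 : (0:ℝ) ≤ (1 + A) ^ (μ - 1) := Real.rpow_nonneg (by linarith) _
    have hcA0 : (0:ℝ) ≤ k₁^2 * (1 + R) * (1 + A) ^ (μ - 1) := by positivity
    have hinsp : ∀ x ∈ Ioo (0:ℝ) R, (∫ y in Ioi (0:ℝ), K x y * g y)
        - (∫ y in Ioo (0:ℝ) A, K x y * g y) = ∫ y in Ici A, K x y * g y := by
      intro x hx
      have hx0 : 0 < x := hx.1
      have hKm : Measurable fun y => K x y := hKmeas.comp measurable_prodMk_left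
      have hKb' : ∀ y ∈ Ioi (0:ℝ), |K x y| ≤ (k₁^2 * (1 + x)) * (1 + y) :=
        fun y hy => by rw [abs_of_nonneg (hKnn x y)]; exact hKb x hx0 y hy
      have hi1 : IntegrableOn (fun y => K x y * g y) (Ioo (0:ℝ) A) :=
        hInner_int g hgmeas hgint x hx0 _ hKm hKb' _ measurableSet_Ioo hIooA
      have hi2 : IntegrableOn (fun y => K x y * g y) (Ici A) :=
        hInner_int g hgmeas hgint x hx0 _ hKm hKb' _ measurableSet_Ici (hIciIoi A hA)
      have hdisj : Disjoint (Ioo (0:ℝ) A) (Ici A) :=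
        disjoint_left.2 fun y hy hy' => absurd hy.2 (not_lt.2 hy')
      have hsp : ∫ y in Ioi (0:ℝ), K x y * g y
          = (∫ y in Ioo (0:ℝ) A, K x y * g y) + ∫ y in Ici A, K x y * g y := by
        rw [← Ioo_union_Ici_eq_Ioi hA0]
        exact setIntegral_union hdisj measurableSet_Ici hi1 hi2
      rw [hsp]
      ring
    have hoi1 : IntegrableOn
        (fun x => g x * (ψ x * ∫ y in Ioi (0:ℝ), K x y * g y)) (Ioo 0 R) := by
      refine hOuter g (hgint'.mono_set hIooIoi) _
        ((hψm.mul (hparam K hKmeas g hgmeas _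
          measurableSet_Ioi).measurable).aestronglyMeasurable.restrict)
        (B * ((k₁^2 * (1 + R)) * Lg)) ?_
      intro x hx
      rw [abs_mul]
      refine mul_le_mul (hB x) ?_ (abs_nonneg _) hB0
      exact hIBg _ _ _ (by positivity) measurableSet_Ioi subset_rfl (hKbR x hx)
    have hoi2 : IntegrableOn
        (fun x => g x * (ψ x * ∫ y in Ioo (0:ℝ) A, K x y * g y)) (Ioo 0 R) := by
      refine hOuter g (hgint'.mono_set hIooIoi) _
        ((hψm.mul (hparam K hKmeas g hgmeas _
          measurableSet_Ioo).measurable).aestronglyMeasurable.restrict)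
        (B * ((k₁^2 * (1 + R)) * Lg)) ?_
      intro x hx
      rw [abs_mul]
      refine mul_le_mul (hB x) ?_ (abs_nonneg _) hB0
      exact hIBg _ _ _ (by positivity) measurableSet_Ioo hIooA
        (fun y hy => hKbR x hx y (hIooA hy))
    rw [← integral_sub hoi1 hoi2]
    calc |∫ x in Ioo (0:ℝ) R, (g x * (ψ x * ∫ y in Ioi (0:ℝ), K x y * g y)
            - g x * (ψ x * ∫ y in Ioo (0:ℝ) A, K x y * g y))|
        ≤ ∫ x in Ioo (0:ℝ) R, |g x * (ψ x * ∫ y in Ioi (0:ℝ), K x y * g y)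
            - g x * (ψ x * ∫ y in Ioo (0:ℝ) A, K x y * g y)| := by
          have := norm_integral_le_integral_norm (μ := volume.restrict (Ioo (0:ℝ) R))
            (fun x => g x * (ψ x * ∫ y in Ioi (0:ℝ), K x y * g y)
              - g x * (ψ x * ∫ y in Ioo (0:ℝ) A, K x y * g y))
          simpa only [Real.norm_eq_abs] using this
      _ ≤ ∫ x in Ioo (0:ℝ) R,
            (B * ((k₁^2 * (1 + R) * (1 + A) ^ (μ - 1)) * Lg)) * |g x| := by
          refine integral_mono_of_nonneg
            (Filter.Eventually.of_forall fun x => abs_nonneg _)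
            ((hgint'.mono_set hIooIoi).abs.const_mul _) ?_
          filter_upwards [self_mem_ae_restrict measurableSet_Ioo] with x hx
          have heq : g x * (ψ x * ∫ y in Ioi (0:ℝ), K x y * g y)
              - g x * (ψ x * ∫ y in Ioo (0:ℝ) A, K x y * g y)
              = (g x * ψ x) * ((∫ y in Ioi (0:ℝ), K x y * g y)
                - ∫ y in Ioo (0:ℝ) A, K x y * g y) := by ring
          rw [heq, hinsp x hx, abs_mul, abs_mul]
          have htb : |∫ y in Ici A, K x y * g y|
              ≤ (k₁^2 * (1 + R) * (1 + A) ^ (μ - 1)) * Lg :=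
            hIBg _ _ _ hcA0 measurableSet_Ici (hIciIoi A hA)
              (fun y hy => by
                rw [abs_of_nonneg (hKnn x y)]; exact hKtail A hA x hx y hy)
          calc |g x| * |ψ x| * |∫ y in Ici A, K x y * g y|
              ≤ (|g x| * B) * ((k₁^2 * (1 + R) * (1 + A) ^ (μ - 1)) * Lg) := by
                refine mul_le_mul (mul_le_mul_of_nonneg_left (hB x) (abs_nonneg _)) htb
                  (abs_nonneg _) (by positivity)
            _ = (B * ((k₁^2 * (1 + R) * (1 + A) ^ (μ - 1)) * Lg)) * |g x| := by ring
      _ = (B * ((k₁^2 * (1 + R) * (1 + A) ^ (μ - 1)) * Lg)) * ∫ x in Ioo (0:ℝ) R, |g x| :=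
          integral_const_mul _ _
      _ ≤ (B * ((k₁^2 * (1 + R) * (1 + A) ^ (μ - 1)) * Lg)) * Lg := by
          refine mul_le_mul_of_nonneg_left (hgLsub _ hIooIoi) (by positivity)
      _ = (B * (k₁^2 * (1 + R)) * Lg * Lg) * (1 + A) ^ (μ - 1) := by ring
  -- final assembly
  rw [hTrw]
  have hmain : Tendsto (fun n : ℕ => ∫ x in Ioo (0:ℝ) R,
      gn n x * (ψ x * ∫ y in Ioi (0:ℝ), Ktr K n x y * gn n y)) atTop
      (𝓝 (∫ x in Ioo (0:ℝ) R, g x * (ψ x * ∫ y in Ioi (0:ℝ), K x y * g y))) := by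
    rw [Metric.tendsto_atTop]
    intro ε hε
    have hrp : Tendsto (fun A : ℝ => (1 + A) ^ (μ - 1)) atTop (𝓝 0) := by
      have h := tendsto_rpow_neg_atTop (y := 1 - μ) (by linarith)
      have h2 := h.comp (tendsto_atTop_add_const_left atTop (1:ℝ) (tendsto_id (α := ℝ)))
      refine h2.congr fun A => ?_
      show ((1:ℝ) + A) ^ (-(1 - μ)) = (1 + A) ^ (μ - 1)
      rw [neg_sub]
    have hc : Tendsto (fun A : ℝ =>
        (B * (k₁^2 * (1 + R)) * L * L + B * (k₁^2 * (1 + R)) * Lg * Lg + 1)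
          * (1 + A) ^ (μ - 1)) atTop (𝓝 0) := by
      simpa using hrp.const_mul
        (B * (k₁^2 * (1 + R)) * L * L + B * (k₁^2 * (1 + R)) * Lg * Lg + 1)
    obtain ⟨A, hAsm, hA1⟩ :=
      ((hc.eventually_lt_const (half_pos hε)).and (eventually_ge_atTop (1:ℝ))).exists
    obtain ⟨N₁, hN₁⟩ := (Metric.tendsto_atTop.1 (hkey A hA1)) (ε/2) (half_pos hε)
    obtain ⟨N₂, hN₂⟩ := eventually_atTop.1
      (tendsto_natCast_atTop_atTop.eventually_ge_atTop (R + A))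
    refine ⟨max N₁ N₂, fun n hn => ?_⟩
    have e1 := htail1 A hA1 n (hN₂ n (le_trans (le_max_right _ _) hn))
    have e2 := htail2 A hA1
    have e3 := hN₁ n (le_trans (le_max_left _ _) hn)
    rw [Real.dist_eq] at e3 ⊢
    have hτ0 : (0:ℝ) ≤ (1 + A) ^ (μ - 1) := Real.rpow_nonneg (by linarith) _
    have tri1 := abs_sub_le
      (∫ x in Ioo (0:ℝ) R, gn n x * (ψ x * ∫ y in Ioi (0:ℝ), Ktr K n x y * gn n y))
      (∫ x in Ioo (0:ℝ) R, gn n x * (ψ x * ∫ y in Ioo (0:ℝ) A, K x y * gn n y))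
      (∫ x in Ioo (0:ℝ) R, g x * (ψ x * ∫ y in Ioi (0:ℝ), K x y * g y))
    have tri2 := abs_sub_le
      (∫ x in Ioo (0:ℝ) R, gn n x * (ψ x * ∫ y in Ioo (0:ℝ) A, K x y * gn n y))
      (∫ x in Ioo (0:ℝ) R, g x * (ψ x * ∫ y in Ioo (0:ℝ) A, K x y * g y))
      (∫ x in Ioo (0:ℝ) R, g x * (ψ x * ∫ y in Ioi (0:ℝ), K x y * g y))
    have e2' : |(∫ x in Ioo (0:ℝ) R, g x * (ψ x * ∫ y in Ioo (0:ℝ) A, K x y * g y))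
        - ∫ x in Ioo (0:ℝ) R, g x * (ψ x * ∫ y in Ioi (0:ℝ), K x y * g y)|
        ≤ (B * (k₁^2 * (1 + R)) * Lg * Lg) * (1 + A) ^ (μ - 1) := by
      rw [abs_sub_comm]
      exact e2
    have hring : (B * (k₁^2 * (1 + R)) * L * L + B * (k₁^2 * (1 + R)) * Lg * Lg + 1)
        * (1 + A) ^ (μ - 1)
        = (B * (k₁^2 * (1 + R)) * L * L) * (1 + A) ^ (μ - 1)
          + (B * (k₁^2 * (1 + R)) * Lg * Lg) * (1 + A) ^ (μ - 1)
          + (1 + A) ^ (μ - 1) := by ring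
    linarith
  exact hmain.congr fun n => (hQrw n).symm
end

section
/- Let α ≥ 0, γ > 0, and define Γ(y,x) = (α+2) x^α y^{γ−(α+1)} for 0 < x < y and Γ(y,x) = 0 otherwise. Then for every R > 0, every y ∈ (0,R), and every measurable set E ⊂ (0,R), ∫₀^y 1_E(x) Γ(y,x) dx ≤ C(α,γ) R^{γ²/(γ+1)} |E|^{γ/(γ+1)}, where C(α,γ) = (α+2)(1+α(γ+1))^{−1/(γ+1)}. In particular this Γ satisfies hypothesis (H5) with ω(R,δ) = C(α,γ) R^{γ²/(γ+1)} δ^{γ/(γ+1)}, and ω(R,δ) → 0 as δ → 0. -/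
open MeasureTheory Set Filter

/-- The power-law fragmentation kernel `Γ(y,x) = (α+2) x^α y^{γ-(α+1)}`, `0 < x < y`,
satisfies the Hölder estimate
`∫₀^y 1_E(x) Γ(y,x) dx ≤ C(α,γ) R^{γ²/(γ+1)} |E|^{γ/(γ+1)}`
for `y ∈ (0,R)` and measurable `E ⊆ (0,R)`, with
`C(α,γ) = (α+2)(1+α(γ+1))^{-1/(γ+1)}`; in particular it satisfies (H5) with
`ω(R,δ) = C(α,γ) R^{γ²/(γ+1)} δ^{γ/(γ+1)} → 0` as `δ → 0`. -/
theorem power_law_kernel_satisfies_H5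
    (α γ : ℝ) (hα : 0 ≤ α) (hγ : 0 < γ)
    (Γ : ℝ → ℝ → ℝ)
    (hΓ : ∀ y x, 0 < x → x < y → Γ y x = (α + 2) * x ^ α * y ^ (γ - (α + 1)))
    (hΓzero : ∀ y x, ¬(0 < x ∧ x < y) → Γ y x = 0) :
    (∀ R > (0:ℝ), ∀ y ∈ Ioo (0:ℝ) R, ∀ E ⊆ Ioo (0:ℝ) R, MeasurableSet E →
      (∫ x in Ioo (0:ℝ) y, E.indicator (fun _ => (1:ℝ)) x * Γ y x)
        ≤ ((α + 2) * (1 + α * (γ + 1)) ^ (-(1:ℝ) / (γ + 1))) * R ^ (γ ^ 2 / (γ + 1))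
            * (volume E).toReal ^ (γ / (γ + 1))) ∧
    (∀ R > (0:ℝ),
      Tendsto (fun δ : ℝ =>
          ((α + 2) * (1 + α * (γ + 1)) ^ (-(1:ℝ) / (γ + 1))) * R ^ (γ ^ 2 / (γ + 1))
            * δ ^ (γ / (γ + 1)))
        (nhdsWithin 0 (Ioi 0)) (nhds 0)) := by
  have hγ1 : (0:ℝ) < γ + 1 := by linarith
  constructor
  · intro R hR y hy E hE hEmeas
    obtain ⟨hy0, hyR⟩ := hy
    set c : ℝ := γ - (α + 1) with hc
    set p : ℝ := (γ + 1) / γ with hp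
    set q : ℝ := γ + 1 with hq
    have hq0 : q ≠ 0 := ne_of_gt hγ1
    have hαq : (0:ℝ) < α * q + 1 := by
      have : 0 ≤ α * q := mul_nonneg hα hγ1.le
      linarith
    have hpq : Real.HolderConjugate p q := by
      rw [Real.holderConjugate_iff]; constructor
      · rw [hp, lt_div_iff₀ hγ]; linarith
      · rw [hp, hq]; field_simp
    set g : ℝ → ℝ := fun x => (α + 2) * x ^ α * y ^ c with hg
    set f : ℝ → ℝ := E.indicator (fun _ => (1:ℝ)) with hf
    have hfin : IsFiniteMeasure (volume.restrict (Ioo (0:ℝ) y)) :=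
      ⟨by rw [Measure.restrict_apply_univ, Real.volume_Ioo]; exact ENNReal.ofReal_lt_top⟩
    -- replace Γ by g on the domain of integration
    have hint : (∫ x in Ioo (0:ℝ) y, f x * Γ y x) = ∫ x in Ioo (0:ℝ) y, f x * g x := by
      refine setIntegral_congr_fun measurableSet_Ioo (fun x hx => ?_)
      rw [hΓ y x hx.1 hx.2]
    -- nonnegativity
    have hf_nonneg : 0 ≤ᵐ[volume.restrict (Ioo (0:ℝ) y)] f :=
      Eventually.of_forall (fun x => Set.indicator_nonneg (fun _ _ => zero_le_one) x)
    have hg_nonneg : 0 ≤ᵐ[volume.restrict (Ioo (0:ℝ) y)] g := by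
      filter_upwards [ae_restrict_mem measurableSet_Ioo] with x hx
      have hx0 : (0:ℝ) < x := hx.1
      positivity
    -- measurability
    have hgm : Measurable g := by fun_prop
    -- Memℒp
    have hf_mem : MemLp f (ENNReal.ofReal p) (volume.restrict (Ioo (0:ℝ) y)) := by
      refine MemLp.of_bound ((measurable_const.indicator hEmeas).aestronglyMeasurable) 1
        (Eventually.of_forall fun x => ?_)
      by_cases h : x ∈ E <;>
        simp [hf, Set.indicator_of_mem, Set.indicator_of_notMem, h]
    have hg_mem : MemLp g (ENNReal.ofReal q) (volume.restrict (Ioo (0:ℝ) y)) := by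
      refine MemLp.of_bound hgm.aestronglyMeasurable ((α + 2) * y ^ α * y ^ c) ?_
      filter_upwards [ae_restrict_mem measurableSet_Ioo] with x hx
      have hx0 : (0:ℝ) < x := hx.1
      have h1 : x ^ α ≤ y ^ α := Real.rpow_le_rpow hx0.le hx.2.le hα
      have h2 : (0:ℝ) ≤ g x := by positivity
      rw [Real.norm_of_nonneg h2]
      have hyc : (0:ℝ) ≤ y ^ c := Real.rpow_nonneg hy0.le c
      have : (α + 2) * x ^ α ≤ (α + 2) * y ^ α :=
        mul_le_mul_of_nonneg_left h1 (by linarith)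
      exact mul_le_mul_of_nonneg_right this hyc
    -- Hölder's inequality
    have hHolder := integral_mul_le_Lp_mul_Lq_of_nonneg hpq hf_nonneg hg_nonneg hf_mem hg_mem
    -- compute ∫ f^p
    have hfp : (∫ x in Ioo (0:ℝ) y, f x ^ p) = (volume (E ∩ Ioo (0:ℝ) y)).toReal := by
      have : (fun x => f x ^ p) = E.indicator (fun _ => (1:ℝ)) := by
        funext x
        by_cases h : x ∈ E <;>
          simp [hf, Set.indicator_of_mem, Set.indicator_of_notMem, h,
            Real.one_rpow, Real.zero_rpow hpq.pos.ne']
      rw [this, integral_indicator hEmeas, Measure.restrict_restrict hEmeas,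
        setIntegral_const]
      simp
      rfl
    -- compute ∫ g^q
    have hxint : (∫ x in Ioo (0:ℝ) y, x ^ (α * q)) = y ^ (α * q + 1) / (α * q + 1) := by
      rw [← integral_Ioc_eq_integral_Ioo, ← intervalIntegral.integral_of_le hy0.le,
        integral_rpow (Or.inl (by linarith : (-1:ℝ) < α * q))]
      rw [Real.zero_rpow (ne_of_gt hαq)]
      ring
    have hgq : (∫ x in Ioo (0:ℝ) y, g x ^ q)
        = (α + 2) ^ q * y ^ (c * q) * (y ^ (α * q + 1) / (α * q + 1)) := by
      have heq : ∀ x ∈ Ioo (0:ℝ) y, g x ^ q = (α + 2) ^ q * y ^ (c * q) * x ^ (α * q) := by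
        intro x hx
        have hx0 : (0:ℝ) < x := hx.1
        rw [hg]
        rw [Real.mul_rpow (by positivity) (Real.rpow_nonneg hy0.le c),
          Real.mul_rpow (by positivity) (Real.rpow_nonneg hx0.le α),
          ← Real.rpow_mul hx0.le, ← Real.rpow_mul hy0.le]
        ring
      rw [setIntegral_congr_fun measurableSet_Ioo heq, integral_const_mul, hxint]
    -- the main computation of the Lq norm
    set K : ℝ := (α + 2) * (1 + α * (γ + 1)) ^ (-(1:ℝ) / (γ + 1)) with hK
    have hKnn : (0:ℝ) ≤ K := by
      have : (0:ℝ) < 1 + α * (γ + 1) := by rw [← hq]; linarith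
      positivity
    have hBval : ((∫ x in Ioo (0:ℝ) y, g x ^ q)) ^ (1 / q) = K * y ^ (γ ^ 2 / (γ + 1)) := by
      have h1αq : (0:ℝ) < 1 + α * q := by linarith
      have hX : (0:ℝ) ≤ K * y ^ (γ ^ 2 / q) := by
        have := Real.rpow_nonneg hy0.le (γ ^ 2 / q); exact mul_nonneg hKnn this
      have hBX : (∫ x in Ioo (0:ℝ) y, g x ^ q) = (K * y ^ (γ ^ 2 / q)) ^ q := by
        rw [hgq, Real.mul_rpow hKnn (Real.rpow_nonneg hy0.le _), hK,
          Real.mul_rpow (by linarith) (Real.rpow_nonneg h1αq.le _),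
          ← Real.rpow_mul h1αq.le, ← Real.rpow_mul hy0.le]
        have e1 : -1 / (γ + 1) * q = -1 := by rw [hq]; field_simp
        have e2 : γ ^ 2 / q * q = γ ^ 2 := by field_simp
        rw [e1, e2, Real.rpow_neg_one]
        have e4 : c * q + (α * q + 1) = γ ^ 2 := by rw [hc, hq]; ring
        have e5 : y ^ (c * q) * y ^ (α * q + 1) = y ^ (γ ^ 2) := by
          rw [← Real.rpow_add hy0, e4]
        rw [div_eq_mul_inv]
        linear_combination (α + 2) ^ q * (α * q + 1)⁻¹ * e5
      rw [hBX, one_div, Real.rpow_rpow_inv hX hq0, hq]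
    -- put everything together
    have hA_le : (volume (E ∩ Ioo (0:ℝ) y)).toReal ≤ (volume E).toReal := by
      refine ENNReal.toReal_mono ?_ (measure_mono inter_subset_left)
      exact (lt_of_le_of_lt (measure_mono hE)
        (by rw [Real.volume_Ioo]; exact ENNReal.ofReal_lt_top)).ne
    have h1p : 1 / p = γ / (γ + 1) := by rw [hp, one_div_div]
    have hApow : ((volume (E ∩ Ioo (0:ℝ) y)).toReal) ^ (1 / p)
        ≤ ((volume E).toReal) ^ (γ / (γ + 1)) := by
      rw [h1p]
      exact Real.rpow_le_rpow ENNReal.toReal_nonneg hA_le (by positivity)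
    have hy_le : y ^ (γ ^ 2 / (γ + 1)) ≤ R ^ (γ ^ 2 / (γ + 1)) :=
      Real.rpow_le_rpow hy0.le hyR.le (by positivity)
    have hBvnn : (0:ℝ) ≤ K * y ^ (γ ^ 2 / (γ + 1)) :=
      mul_nonneg hKnn (Real.rpow_nonneg hy0.le _)
    calc (∫ x in Ioo (0:ℝ) y, f x * Γ y x)
        = ∫ x in Ioo (0:ℝ) y, f x * g x := hint
      _ ≤ (∫ x in Ioo (0:ℝ) y, f x ^ p) ^ (1 / p)
            * (∫ x in Ioo (0:ℝ) y, g x ^ q) ^ (1 / q) := hHolder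
      _ = ((volume (E ∩ Ioo (0:ℝ) y)).toReal) ^ (1 / p) * (K * y ^ (γ ^ 2 / (γ + 1))) := by
          rw [hfp, hBval]
      _ ≤ ((volume E).toReal) ^ (γ / (γ + 1)) * (K * y ^ (γ ^ 2 / (γ + 1))) :=
          mul_le_mul_of_nonneg_right hApow hBvnn
      _ ≤ ((volume E).toReal) ^ (γ / (γ + 1)) * (K * R ^ (γ ^ 2 / (γ + 1))) := by
          refine mul_le_mul_of_nonneg_left (mul_le_mul_of_nonneg_left hy_le hKnn) ?_
          exact Real.rpow_nonneg ENNReal.toReal_nonneg _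
      _ = K * R ^ (γ ^ 2 / (γ + 1)) * (volume E).toReal ^ (γ / (γ + 1)) := by ring
  · intro R hR
    have hcpos : (0:ℝ) < γ / (γ + 1) := by positivity
    have h1 : Tendsto (fun δ : ℝ => δ ^ (γ / (γ + 1))) (nhdsWithin 0 (Ioi 0)) (nhds 0) := by
      have h2 := (Real.continuousAt_rpow_const 0 (γ / (γ + 1)) (Or.inr hcpos.le)).tendsto
      rw [Real.zero_rpow hcpos.ne'] at h2
      exact h2.mono_left nhdsWithin_le_nhds
    have := h1.const_mul (((α + 2) * (1 + α * (γ + 1)) ^ (-(1:ℝ) / (γ + 1))) * R ^ (γ ^ 2 / (γ + 1)))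
    simpa using this
end
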